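/- arXiv:0907.3097 — 3 statements merged into one kernel-verified Lean document; each statement's English description precedes it below -/
import Mathlib

section
/- Let ℓ ∈ ℕ, let A ⊆ Q = [2]^ℓ, and suppose A internally spans Q. Let S be an (ℓ−2)-dimensional subcube of Q with |A ∖ S| = 1. Then S is internally spanned by A ∩ S. Moreover, if ℓ is even and A sequentially spans Q, then S is sequentially spanned by A ∩ S. -/
/-- Adjacency in the grid graph `[n]^d`: two vertices are adjacent iff they differ
by exactly 1 in a single coordinate. -/
def gridAdj (n d : ℕ) (x y : Fin d → Fin n) : Prop :=
  ∃ i, ((x i : ℕ) + 1 = (y i : ℕ) ∨ (y i : ℕ) + 1 = (x i : ℕ)) ∧ ∀ j, j ≠ i → x j = y j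

/-- The grid graph `[n]^d`. -/
def gridGraph (n d : ℕ) : SimpleGraph (Fin d → Fin n) where
  Adj := gridAdj n d
  symm := by
    constructor
    rintro x y ⟨i, h1, h2⟩
    exact ⟨i, h1.symm, fun j hj => (h2 j hj).symm⟩
  loopless := by
    constructor
    rintro x ⟨i, h1, -⟩
    omega

/-- Graph distance from a vertex to a set in the grid graph. -/
noncomputable def gridSetDist (n d : ℕ) (x : Fin d → Fin n) (S : Set (Fin d → Fin n)) : ℕ :=
  sInf (Set.image (fun y => (gridGraph n d).dist x y) S)

/-- One step of `r`-neighbour bootstrap percolation. -/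
def bootStep {V : Type*} (adj : V → V → Prop) (r : ℕ) (A : Set V) : Set V :=
  A ∪ {v | r ≤ {u | adj v u ∧ u ∈ A}.ncard}

/-- The closure `[A]` of a set under `r`-neighbour bootstrap percolation. -/
def bootClosure {V : Type*} (adj : V → V → Prop) (r : ℕ) (A : Set V) : Set V :=
  ⋃ t, (bootStep adj r)^[t] A

/-- The dimension of a cube in `[n]^d`: the sum over coordinates of
(number of values taken in that coordinate minus one). -/
noncomputable def cubeDim {n d : ℕ} (Q : Set (Fin d → Fin n)) : ℕ :=
  ∑ i : Fin d, ((Set.image (fun x => x i) Q).ncard - 1)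

/-- A cube in `[n]^d` is a (nonempty) product of integer intervals. -/
def IsCube {n d : ℕ} (Q : Set (Fin d → Fin n)) : Prop :=
  ∃ lo hi : Fin d → Fin n, (∀ i, lo i ≤ hi i) ∧
    Q = {x | ∀ i, lo i ≤ x i ∧ x i ≤ hi i}

/-- A hypercube in `[n]^d` is a cube all of whose sides have length 1 or 2,
i.e. a copy of some `[2]^m`. -/
def IsHypercube {n d : ℕ} (Q : Set (Fin d → Fin n)) : Prop :=
  ∃ lo hi : Fin d → Fin n, (∀ i, lo i ≤ hi i ∧ (hi i : ℕ) ≤ (lo i : ℕ) + 1) ∧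
    Q = {x | ∀ i, lo i ≤ x i ∧ x i ≤ hi i}

/-- `Q` is internally spanned by `A`: the bootstrap closure of `A ∩ Q` is `Q`. -/
def IntSpans (n d : ℕ) (A Q : Set (Fin d → Fin n)) : Prop :=
  bootClosure (gridAdj n d) 2 (A ∩ Q) = Q

/-- A set is constant on the coordinates in `J`. -/
def ConstOn {n d : ℕ} (J : Set (Fin d)) (C : Set (Fin d → Fin n)) : Prop :=
  ∀ i ∈ J, ∀ x ∈ C, ∀ y ∈ C, x i = y i

/-- `C` belongs to `Q⟨J⟩`: `C` is a maximal subcube of `Q` constant on the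
coordinates in `J`. -/
def MaxConstSubcube (n d : ℕ) (Q : Set (Fin d → Fin n)) (J : Set (Fin d))
    (C : Set (Fin d → Fin n)) : Prop :=
  IsCube C ∧ C ⊆ Q ∧ ConstOn J C ∧
    ∀ C', IsCube C' → C' ⊆ Q → ConstOn J C' → C ⊆ C' → C' = C

/-- `{j,k}` is a final pair for `A` in `Q`. -/
def FinalPair (n d : ℕ) (A Q : Set (Fin d → Fin n)) (j k : Fin d) : Prop :=
  IntSpans n d A Q ∧
    ∃ C, MaxConstSubcube n d Q {j, k} C ∧ IntSpans n d A C ∧ (A \ C).ncard = 1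

/-- `{i}` is a final element for `A` in `Q`. -/
def FinalElt (n d : ℕ) (A Q : Set (Fin d → Fin n)) (i : Fin d) : Prop :=
  IntSpans n d A Q ∧
    ∃ C, MaxConstSubcube n d Q {i} C ∧ IntSpans n d A C ∧ (A \ C).ncard = 1

/-- `A` sequentially spans the hypercube `Q` (of dimension `2t`):
`|A| = t+1` and `A` admits an ordering `(a 0, …, a t)` with
`dist (a (j+1), [{a 0,…,a j}]) = 2` for all `j < t`. -/
def SeqSpans (n d : ℕ) (A Q : Set (Fin d → Fin n)) : Prop :=
  ∃ t : ℕ, cubeDim Q = 2 * t ∧ A ⊆ Q ∧ A.ncard = t + 1 ∧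
    bootClosure (gridAdj n d) 2 A = Q ∧
    ∃ a : Fin (t + 1) → (Fin d → Fin n), Function.Injective a ∧ Set.range a = A ∧
      ∀ j : Fin t, gridSetDist n d (a j.succ)
        (bootClosure (gridAdj n d) 2 (a '' {i | (i : ℕ) ≤ (j : ℕ)})) = 2

/-- `{j,k}` is an ending for `A` (in the full cube): some `A' ⊆ A` sequentially
spans one of the maximal subcubes constant on `{j,k}`. -/
def EndingPair (n d : ℕ) (A : Set (Fin d → Fin n)) (j k : Fin d) : Prop :=
  ∃ A', A' ⊆ A ∧ ∃ C, MaxConstSubcube n d Set.univ {j, k} C ∧ SeqSpans n d A' C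

/-- `Δ(b,C)`: the set of directions in which the vertex `b` and the cube `C`
are both constant and differ. -/
def Delta {n d : ℕ} (b : Fin d → Fin n) (C : Set (Fin d → Fin n)) : Set (Fin d) :=
  {i | (∀ x ∈ C, ∀ y ∈ C, x i = y i) ∧ ∀ x ∈ C, x i ≠ b i}

/-- The probability of an event `E` for a random subset `A ~ Bin(V,p)`,
each element included independently with probability `p`. -/
noncomputable def binProb {V : Type*} [Fintype V] (p : ℝ) (E : Finset V → Prop) : ℝ :=
  ∑ A : Finset V,
    Set.indicator {B | E B} (fun B => p ^ B.card * (1 - p) ^ (Fintype.card V - B.card)) A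

/-- The expectation of `f` for a random subset `A ~ Bin(V,p)`. -/
noncomputable def binExp {V : Type*} [Fintype V] (p : ℝ) (f : Finset V → ℝ) : ℝ :=
  ∑ A : Finset V, f A * (p ^ A.card * (1 - p) ^ (Fintype.card V - A.card))

/-- `P(ℓ,p)`: the probability that `A ~ Bin([2]^ℓ,p)` internally spans `[2]^ℓ`. -/
noncomputable def Pprob (ℓ : ℕ) (p : ℝ) : ℝ :=
  binProb p (fun A : Finset (Fin ℓ → Fin 2) =>
    bootClosure (gridAdj 2 ℓ) 2 (↑A : Set (Fin ℓ → Fin 2)) = Set.univ)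

/-- `Q(2ℓ,p)`: the probability that `A ~ Bin([2]^{2ℓ},p)` sequentially
internally spans `[2]^{2ℓ}`. -/
noncomputable def Qprob (ℓ : ℕ) (p : ℝ) : ℝ :=
  binProb p (fun A : Finset (Fin (2 * ℓ) → Fin 2) =>
    SeqSpans 2 (2 * ℓ) (↑A : Set (Fin (2 * ℓ) → Fin 2)) Set.univ)

/-- `|𝒮(ℓ)|`: the number of `(ℓ+1)`-subsets of `[2]^{2ℓ}` which sequentially span it. -/
noncomputable def Scard (ℓ : ℕ) : ℕ :=
  {A : Set (Fin (2 * ℓ) → Fin 2) | SeqSpans 2 (2 * ℓ) A Set.univ}.ncard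

/-- The probability that `A ~ Bin([n]^d,p)` percolates in `r`-neighbour
bootstrap percolation. -/
noncomputable def percProb (n d r : ℕ) (p : ℝ) : ℝ :=
  binProb p (fun A : Finset (Fin d → Fin n) =>
    bootClosure (gridAdj n d) r (↑A : Set (Fin d → Fin n)) = Set.univ)

/-- The critical probability `p_c([n]^d, r)`. -/
noncomputable def pc (n d r : ℕ) : ℝ :=
  sInf {p : ℝ | 0 ≤ p ∧ p ≤ 1 ∧ 1 / 2 ≤ percProb n d r p}

/-- The series `x ↦ ∑_{k≥0} (-1)^k x^k / (2^{k²-k} k!)`, whose smallest positive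
root is `λ ≈ 1.166`. -/
noncomputable def lamSeries (x : ℝ) : ℝ :=
  ∑' k : ℕ, (-1 : ℝ) ^ k * x ^ k / (2 ^ (k ^ 2 - k) * (Nat.factorial k))

/-! ### Auxiliary lemmas: bootstrap closure basics -/

section ClosureBasics

set_option linter.unusedSectionVars false

variable {V : Type*} [Finite V] {adj : V → V → Prop} {r : ℕ}

lemma subset_bootStep (A : Set V) : A ⊆ bootStep adj r A :=
  Set.subset_union_left

lemma bootStep_mono {A B : Set V} (h : A ⊆ B) : bootStep adj r A ⊆ bootStep adj r B := by
  intro v hv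
  rcases hv with h1 | h2
  · exact Or.inl (h h1)
  · refine Or.inr (le_trans h2 (Set.ncard_le_ncard ?_ (Set.toFinite _)))
    intro u hu
    exact ⟨hu.1, h hu.2⟩

lemma iterate_bootStep_mono {A B : Set V} (h : A ⊆ B) (t : ℕ) :
    (bootStep adj r)^[t] A ⊆ (bootStep adj r)^[t] B := by
  induction t with
  | zero => exact h
  | succ n ih =>
      rw [Function.iterate_succ_apply', Function.iterate_succ_apply']
      exact bootStep_mono ih

lemma iterate_subset_bootClosure (A : Set V) (t : ℕ) :
    (bootStep adj r)^[t] A ⊆ bootClosure adj r A :=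
  Set.subset_iUnion (fun t => (bootStep adj r)^[t] A) t

lemma subset_bootClosure (A : Set V) : A ⊆ bootClosure adj r A :=
  iterate_subset_bootClosure A 0

lemma iterate_bootStep_le {A : Set V} {s t : ℕ} (h : s ≤ t) :
    (bootStep adj r)^[s] A ⊆ (bootStep adj r)^[t] A := by
  induction t with
  | zero => simpa [Nat.le_zero.mp h]
  | succ n ih =>
      rcases Nat.lt_or_ge s (n+1) with hlt | hge
      · refine (ih (Nat.lt_succ_iff.mp hlt)).trans ?_
        rw [Function.iterate_succ_apply']
        exact subset_bootStep _
      · have : s = n+1 := le_antisymm h hge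
        simp [this]

lemma bootClosure_mono {A B : Set V} (h : A ⊆ B) :
    bootClosure adj r A ⊆ bootClosure adj r B := by
  intro v hv
  rcases Set.mem_iUnion.mp hv with ⟨t, ht⟩
  exact iterate_subset_bootClosure B t (iterate_bootStep_mono h t ht)

lemma bootStep_bootClosure (A : Set V) :
    bootStep adj r (bootClosure adj r A) = bootClosure adj r A := by
  refine le_antisymm ?_ (subset_bootStep _)
  intro v hv
  rcases hv with h1 | h2
  · exact h1
  · classical
    set W : Set V := {u | adj v u ∧ u ∈ bootClosure adj r A} with hW
    have hWfin : W.Finite := Set.toFinite _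
    have hstage : ∀ u : V, ∃ t, u ∈ W → u ∈ (bootStep adj r)^[t] A := by
      intro u
      by_cases hu : u ∈ W
      · rcases Set.mem_iUnion.mp hu.2 with ⟨t, ht⟩
        exact ⟨t, fun _ => ht⟩
      · exact ⟨0, fun h => absurd h hu⟩
    choose f hf using hstage
    set T : ℕ := hWfin.toFinset.sup f with hT
    have hWT : W ⊆ (bootStep adj r)^[T] A := by
      intro u hu
      have hu' : u ∈ hWfin.toFinset := (Set.Finite.mem_toFinset _).mpr hu
      exact iterate_bootStep_le (Finset.le_sup hu') (hf u hu)
    have : v ∈ (bootStep adj r)^[T+1] A := by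
      rw [Function.iterate_succ_apply']
      refine Or.inr ?_
      refine le_trans h2 (Set.ncard_le_ncard ?_ (Set.toFinite _))
      intro u hu
      exact ⟨hu.1, hWT hu⟩
    exact iterate_subset_bootClosure A (T+1) this

/-- A set `C` is closed for the percolation if `bootStep` does not enlarge it. -/
lemma bootClosure_subset_of_closed {A C : Set V} (hAC : A ⊆ C)
    (hC : bootStep adj r C = C) : bootClosure adj r A ⊆ C := by
  have key : ∀ t : ℕ, (bootStep adj r)^[t] A ⊆ C := by
    intro t
    induction t with
    | zero => exact hAC
    | succ n ih =>
        rw [Function.iterate_succ_apply']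
        calc bootStep adj r ((bootStep adj r)^[n] A) ⊆ bootStep adj r C := bootStep_mono ih
        _ = C := hC
  intro v hv
  rcases Set.mem_iUnion.mp hv with ⟨t, ht⟩
  exact key t ht

lemma bootClosure_idem (A : Set V) :
    bootClosure adj r (bootClosure adj r A) = bootClosure adj r A :=
  le_antisymm (bootClosure_subset_of_closed le_rfl (bootStep_bootClosure A))
    (subset_bootClosure _)

lemma bootClosure_closure_union (A C : Set V) :
    bootClosure adj r (bootClosure adj r A ∪ C) = bootClosure adj r (A ∪ C) := by
  refine le_antisymm ?_ (bootClosure_mono (Set.union_subset_union_left C (subset_bootClosure A)))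
  have h1 : bootClosure adj r A ∪ C ⊆ bootClosure adj r (A ∪ C) :=
    Set.union_subset (bootClosure_mono Set.subset_union_left)
      ((Set.subset_union_right (s := A)).trans (subset_bootClosure _))
  calc bootClosure adj r (bootClosure adj r A ∪ C)
      ⊆ bootClosure adj r (bootClosure adj r (A ∪ C)) := bootClosure_mono h1
    _ = bootClosure adj r (A ∪ C) := bootClosure_idem _

lemma bootStep_inter_closed {C₁ C₂ : Set V} (h1 : bootStep adj r C₁ = C₁)
    (h2 : bootStep adj r C₂ = C₂) : bootStep adj r (C₁ ∩ C₂) = C₁ ∩ C₂ := by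
  refine le_antisymm ?_ (subset_bootStep _)
  intro v hv
  have k1 : v ∈ bootStep adj r C₁ := bootStep_mono Set.inter_subset_left hv
  have k2 : v ∈ bootStep adj r C₂ := bootStep_mono Set.inter_subset_right hv
  exact ⟨h1 ▸ k1, h2 ▸ k2⟩

lemma bootStep_singleton (hr : 2 ≤ r) (a : V) :
    bootStep adj r {a} = ({a} : Set V) := by
  refine le_antisymm ?_ (subset_bootStep _)
  rintro v (hv | hv)
  · exact hv
  · exfalso
    simp only [Set.mem_setOf_eq] at hv
    have hle : ({u | adj v u ∧ u ∈ ({a} : Set V)}).ncard ≤ ({a} : Set V).ncard :=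
      Set.ncard_le_ncard (fun u hu => hu.2) (Set.toFinite _)
    rw [Set.ncard_singleton] at hle
    omega

end ClosureBasics

/-! ### The grid graph on `Fin 2`: adjacency and Hamming distance -/

section Grid

open Function

variable {ℓ : ℕ}

lemma fin2_step_iff : ∀ a b : Fin 2, (((a:ℕ)+1=(b:ℕ)) ∨ ((b:ℕ)+1=(a:ℕ))) ↔ a ≠ b := by
  decide

lemma fin2_eq_of_ne_of_ne : ∀ a b c : Fin 2, a ≠ b → c ≠ b → a = c := by decide

lemma fin2_add_one_ne : ∀ a : Fin 2, a + 1 ≠ a := by decide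

lemma gridAdj_iff {x y : Fin ℓ → Fin 2} :
    gridAdj 2 ℓ x y ↔ ∃ i, x i ≠ y i ∧ ∀ j, j ≠ i → x j = y j := by
  unfold gridAdj
  constructor <;> rintro ⟨i, h1, h2⟩ <;> exact ⟨i, by
    first
      | exact (fin2_step_iff (x i) (y i)).mp h1
      | exact (fin2_step_iff (x i) (y i)).mpr h1, h2⟩

lemma gridAdj_hammingDist {x y : Fin ℓ → Fin 2} (h : gridAdj 2 ℓ x y) :
    hammingDist x y = 1 := by
  obtain ⟨i, h1, h2⟩ := gridAdj_iff.mp h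
  have : ({m | x m ≠ y m} : Finset (Fin ℓ)) = {i} := by
    ext m
    simp only [Finset.mem_filter, Finset.mem_univ, true_and, Finset.mem_singleton]
    constructor
    · intro hm
      by_contra hmi
      exact hm (h2 m hmi)
    · rintro rfl; exact h1
  simp [hammingDist, this]

lemma gridAdj_of_update {x : Fin ℓ → Fin 2} {i : Fin ℓ} {c : Fin 2} (h : c ≠ x i) :
    gridAdj 2 ℓ x (update x i c) := by
  refine gridAdj_iff.mpr ⟨i, ?_, fun j hj => ?_⟩
  · rw [update_self]; exact fun hc => h hc.symm
  · rw [update_of_ne hj]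

lemma exists_walk_hamming (x y : Fin ℓ → Fin 2) :
    ∃ w : (gridGraph 2 ℓ).Walk x y, w.length = hammingDist x y := by
  set n := hammingDist x y with hn
  clear_value n
  induction n generalizing x with
  | zero =>
      have : x = y := eq_of_hammingDist_eq_zero hn.symm
      subst this
      exact ⟨SimpleGraph.Walk.nil, rfl⟩
  | succ n ih =>
      have hne : ({m | x m ≠ y m} : Finset (Fin ℓ)).Nonempty := by
        rw [← Finset.card_pos]
        change 0 < hammingDist x y
        omega
      obtain ⟨i, hi⟩ := hne
      have hxiyi : x i ≠ y i := by simpa using hi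
      set x' := update x i (y i) with hx'
      have hadj : (gridGraph 2 ℓ).Adj x x' := gridAdj_of_update (fun h => hxiyi h.symm)
      have hham : hammingDist x' y = n := by
        have hfil : ({m | x' m ≠ y m} : Finset (Fin ℓ)) =
            ({m | x m ≠ y m} : Finset (Fin ℓ)).erase i := by
          ext m
          simp only [Finset.mem_filter, Finset.mem_univ, true_and, Finset.mem_erase]
          constructor
          · intro hm
            have hmi : m ≠ i := by
              rintro rfl
              rw [hx', update_self] at hm
              exact hm rfl
            rw [hx', update_of_ne hmi] at hm
            exact ⟨hmi, hm⟩
          · rintro ⟨hmi, hm⟩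
            rwa [hx', update_of_ne hmi]
        have : hammingDist x' y = (({m | x m ≠ y m} : Finset (Fin ℓ)).erase i).card := by
          rw [← hfil]; rfl
        rw [this, Finset.card_erase_of_mem hi]
        change hammingDist x y - 1 = n
        omega
      obtain ⟨w, hw⟩ := ih x' hham.symm
      exact ⟨SimpleGraph.Walk.cons hadj w, by
        rw [SimpleGraph.Walk.length_cons, hw]⟩

lemma hamming_le_length {x y : Fin ℓ → Fin 2} (w : (gridGraph 2 ℓ).Walk x y) :
    hammingDist x y ≤ w.length := by
  induction w with
  | nil => simp
  | cons h p ih =>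
      rename_i u v z
      calc hammingDist u z ≤ hammingDist u v + hammingDist v z := hammingDist_triangle _ _ _
        _ ≤ 1 + p.length := by
            have := gridAdj_hammingDist (x := u) (y := v) h
            omega
        _ = (SimpleGraph.Walk.cons h p).length := by
            rw [SimpleGraph.Walk.length_cons]; omega

lemma grid_dist_eq_hamming (x y : Fin ℓ → Fin 2) :
    (gridGraph 2 ℓ).dist x y = hammingDist x y := by
  obtain ⟨w, hw⟩ := exists_walk_hamming x y
  refine le_antisymm (hw ▸ SimpleGraph.dist_le w) ?_
  obtain ⟨p, hp⟩ := (SimpleGraph.Walk.reachable w).exists_walk_length_eq_dist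
  rw [← hp]
  exact hamming_le_length p

lemma hammingDist_update_update_le (x z : Fin ℓ → Fin 2) (i : Fin ℓ) (c : Fin 2) :
    hammingDist (update x i c) (update z i c) ≤ hammingDist x z := by
  refine Finset.card_le_card ?_
  intro m hm
  simp only [Finset.mem_filter, Finset.mem_univ, true_and] at hm ⊢
  intro hxz
  rcases eq_or_ne m i with rfl | hmi
  · simp at hm
  · rw [update_of_ne hmi, update_of_ne hmi] at hm
    exact hm hxz

/-- Sets defined by fixing one coordinate are closed. -/
lemma fixcoord_closed (i : Fin ℓ) (c : Fin 2) :
    bootStep (gridAdj 2 ℓ) 2 {x | x i = c} = {x | x i = c} := by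
  refine le_antisymm ?_ (subset_bootStep _)
  rintro v (hv | hv)
  · exact hv
  · by_contra hvi
    have hsub : {u | gridAdj 2 ℓ v u ∧ u ∈ {x | x i = c}} ⊆ {update v i c} := by
      rintro u ⟨hadj, huc⟩
      obtain ⟨d, hd1, hd2⟩ := gridAdj_iff.mp hadj
      have hdi : d = i := by
        by_contra hdi
        exact hvi (by rw [← huc] at *; exact (hd2 i (fun h => hdi h.symm)) ▸ rfl)
      subst hdi
      have : u = update v d c := by
        funext m
        rcases eq_or_ne m d with rfl | hmd
        · rw [update_self]; exact huc
        · rw [update_of_ne hmd]; exact (hd2 m hmd).symm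
      simpa using this
    have := (Set.ncard_le_ncard hsub (Set.toFinite _)).trans_lt'
      (lt_of_lt_of_le one_lt_two hv)
    rw [Set.ncard_singleton] at this
    omega

/-- The projection lemma: forcing a coordinate commutes subordinately
with the bootstrap closure. -/
lemma proj_bootClosure (i : Fin ℓ) (c : Fin 2) (X : Set (Fin ℓ → Fin 2)) :
    (fun x => update x i c) '' (bootClosure (gridAdj 2 ℓ) 2 X) ⊆
      bootClosure (gridAdj 2 ℓ) 2 ((fun x => update x i c) '' X) := by
  set π : (Fin ℓ → Fin 2) → (Fin ℓ → Fin 2) := fun x => update x i c with hπ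
  set Y := π '' X with hY
  have key : ∀ t, π '' ((bootStep (gridAdj 2 ℓ) 2)^[t] X) ⊆ bootClosure (gridAdj 2 ℓ) 2 Y := by
    intro t
    induction t with
    | zero => exact (Set.image_mono le_rfl).trans (subset_bootClosure Y)
    | succ n ih =>
        rw [Function.iterate_succ_apply']
        rintro _ ⟨v, hv, rfl⟩
        rcases hv with hv | hv
        · exact ih ⟨v, hv, rfl⟩
        · -- v is infected by two distinct neighbours u₁ u₂
          obtain ⟨u₁, hu₁, u₂, hu₂, hne⟩ := (Set.one_lt_ncard (Set.toFinite _)).mp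
            (lt_of_lt_of_le one_lt_two hv)
          obtain ⟨d₁, hd₁, he₁⟩ := gridAdj_iff.mp hu₁.1
          obtain ⟨d₂, hd₂, he₂⟩ := gridAdj_iff.mp hu₂.1
          have hdd : d₁ ≠ d₂ := by
            rintro rfl
            apply hne
            funext m
            rcases eq_or_ne m d₁ with rfl | hm
            · exact fin2_eq_of_ne_of_ne _ _ _ (fun h => hd₁ h.symm) (fun h => hd₂ h.symm)
            · rw [← he₁ m hm, ← he₂ m hm]
          have hπmem : ∀ u, u ∈ (bootStep (gridAdj 2 ℓ) 2)^[n] X →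
              π u ∈ bootClosure (gridAdj 2 ℓ) 2 Y := fun u hu => ih ⟨u, hu, rfl⟩
          rcases eq_or_ne d₁ i with rfl | hne₁
          · -- π u₁ = π v
            have : π u₁ = π v := by
              funext m
              rcases eq_or_ne m d₁ with rfl | hm
              · simp [hπ]
              · simp only [hπ, update_of_ne hm]
                exact (he₁ m hm).symm
            exact this ▸ hπmem u₁ hu₁.2
          rcases eq_or_ne d₂ i with rfl | hne₂
          · have : π u₂ = π v := by
              funext m
              rcases eq_or_ne m d₂ with rfl | hm
              · simp [hπ]
              · simp only [hπ, update_of_ne hm]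
                exact (he₂ m hm).symm
            exact this ▸ hπmem u₂ hu₂.2
          · -- both coordinates away from i : genuine infection downstairs
            have hadj : ∀ (u : Fin ℓ → Fin 2) (d : Fin ℓ), d ≠ i → v d ≠ u d →
                (∀ m, m ≠ d → v m = u m) → gridAdj 2 ℓ (π v) (π u) := by
              intro u d hdne hdv hm
              refine gridAdj_iff.mpr ⟨d, ?_, fun m hmd => ?_⟩
              · simpa [hπ, update_of_ne hdne] using hdv
              · rcases eq_or_ne m i with rfl | hmi
                · simp [hπ]
                · simp only [hπ, update_of_ne hmi]
                  exact hm m hmd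
            have hadj₁ : gridAdj 2 ℓ (π v) (π u₁) := hadj u₁ d₁ hne₁ hd₁ he₁
            have hadj₂ : gridAdj 2 ℓ (π v) (π u₂) := hadj u₂ d₂ hne₂ hd₂ he₂
            have hπne : π u₁ ≠ π u₂ := by
              intro h
              have h1 : u₁ d₁ = u₂ d₁ := by
                have hc := congrFun h d₁
                simp only [hπ, Function.update_of_ne hne₁] at hc
                exact hc
              have h2 : v d₁ = u₂ d₁ := he₂ d₁ hdd
              exact hd₁ (h2.trans h1.symm)
            have hmem : π v ∈ bootStep (gridAdj 2 ℓ) 2 (bootClosure (gridAdj 2 ℓ) 2 Y) := by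
              refine Or.inr ?_
              have hsub : ({π u₁, π u₂} : Set (Fin ℓ → Fin 2)) ⊆
                  {u | gridAdj 2 ℓ (π v) u ∧ u ∈ bootClosure (gridAdj 2 ℓ) 2 Y} := by
                rintro u (rfl | rfl)
                · exact ⟨hadj₁, hπmem u₁ hu₁.2⟩
                · exact ⟨hadj₂, hπmem u₂ hu₂.2⟩
              calc (2:ℕ) = ({π u₁, π u₂} : Set (Fin ℓ → Fin 2)).ncard :=
                    (Set.ncard_pair hπne).symm
                _ ≤ _ := Set.ncard_le_ncard hsub (Set.toFinite _)
            rwa [bootStep_bootClosure] at hmem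
  intro z hz
  obtain ⟨v, hv, rfl⟩ := hz
  obtain ⟨t, ht⟩ := Set.mem_iUnion.mp hv
  exact key t ⟨v, ht, rfl⟩

/-- A codimension-2 subcube of `[2]^ℓ` is given by fixing two coordinates. -/
lemma cube_two_fixed {S : Set (Fin ℓ → Fin 2)} (hS : IsCube S)
    (hdim : cubeDim S + 2 = ℓ) :
    ∃ (j k : Fin ℓ) (cj ck : Fin 2), j ≠ k ∧ S = {x | x j = cj ∧ x k = ck} := by
  classical
  obtain ⟨lo, hi, hle, rfl⟩ := hS
  set S : Set (Fin ℓ → Fin 2) := {x | ∀ i, lo i ≤ x i ∧ x i ≤ hi i} with hSdef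
  have hdesc : S = {x | ∀ i, lo i = hi i → x i = lo i} := by
    ext x
    simp only [hSdef, Set.mem_setOf_eq]
    constructor
    · intro hx i hfix
      exact le_antisymm (hfix ▸ (hx i).2) (hx i).1
    · intro hx i
      by_cases hfix : lo i = hi i
      · rw [hx i hfix]
        exact ⟨le_rfl, hfix ▸ le_rfl⟩
      · have h1 : (lo i : ℕ) ≤ hi i := hle i
        have h2 : (lo i : ℕ) ≠ (hi i : ℕ) := fun h => hfix (Fin.ext h)
        have h3 := (lo i).isLt
        have h4 := (hi i).isLt
        have h5 := (x i).isLt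
        constructor
        · show (lo i : ℕ) ≤ (x i : ℕ)
          omega
        · show (x i : ℕ) ≤ (hi i : ℕ)
          omega
  have himage : ∀ i, ((fun x => x i) '' S).ncard = if lo i = hi i then 1 else 2 := by
    intro i
    by_cases hfix : lo i = hi i
    · rw [if_pos hfix]
      have : (fun x => x i) '' S = {lo i} := by
        apply le_antisymm
        · rintro _ ⟨x, hx, rfl⟩
          exact le_antisymm (hfix ▸ (hx i).2) (hx i).1
        · rintro _ rfl
          exact ⟨lo, fun m => ⟨le_rfl, hle m⟩, rfl⟩
      rw [this, Set.ncard_singleton]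
    · rw [if_neg hfix]
      have : (fun x => x i) '' S = Set.univ := by
        refine Set.eq_univ_of_forall (fun v => ?_)
        refine ⟨Function.update lo i v, fun m => ?_, Function.update_self _ _ _⟩
        rcases eq_or_ne m i with rfl | hm
        · rw [Function.update_self]
          have h1 : (lo m : ℕ) ≤ hi m := hle m
          have h2 : (lo m : ℕ) ≠ (hi m : ℕ) := fun h => hfix (Fin.ext h)
          have h3 := (lo m).isLt
          have h4 := (hi m).isLt
          have h5 := v.isLt
          exact ⟨by show (lo m:ℕ) ≤ _; omega, by show (v:ℕ) ≤ _; omega⟩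
        · rw [Function.update_of_ne hm]
          exact ⟨le_rfl, hle m⟩
      rw [this, Set.ncard_univ]
      simp
  have hcard : (Finset.univ.filter (fun i => lo i = hi i)).card = 2 := by
    have hsum : cubeDim S = (Finset.univ.filter (fun i => ¬ lo i = hi i)).card := by
      unfold cubeDim
      rw [Finset.card_filter]
      refine Finset.sum_congr rfl (fun i _ => ?_)
      rw [himage i]
      by_cases h : lo i = hi i <;> simp [h]
    have htot := Finset.card_filter_add_card_filter_not
      (s := (Finset.univ : Finset (Fin ℓ))) (p := fun i => lo i = hi i)
    rw [Finset.card_univ, Fintype.card_fin] at htot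
    omega
  obtain ⟨j, k, hjk, hF⟩ := Finset.card_eq_two.mp hcard
  have hmemF : ∀ i, lo i = hi i ↔ (i = j ∨ i = k) := by
    intro i
    constructor
    · intro h
      have : i ∈ ({j, k} : Finset (Fin ℓ)) := hF ▸ Finset.mem_filter.mpr ⟨Finset.mem_univ _, h⟩
      simpa using this
    · intro h
      have : i ∈ Finset.univ.filter (fun i => lo i = hi i) := by
        rw [hF]; simpa using h
      exact (Finset.mem_filter.mp this).2
  refine ⟨j, k, lo j, lo k, hjk, ?_⟩
  rw [hdesc]
  ext x
  simp only [Set.mem_setOf_eq]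
  constructor
  · intro hx
    exact ⟨hx j ((hmemF j).mpr (Or.inl rfl)), hx k ((hmemF k).mpr (Or.inr rfl))⟩
  · rintro ⟨hxj, hxk⟩ i hfix
    rcases (hmemF i).mp hfix with rfl | rfl
    · exact hxj
    · exact hxk

lemma eq_proj_of_hamming_le_two {j k : Fin ℓ} (hjk : j ≠ k) {a z : Fin ℓ → Fin 2}
    (hj : a j ≠ z j) (hk : a k ≠ z k) (h2 : hammingDist a z ≤ 2) :
    z = Function.update (Function.update a j (z j)) k (z k) := by
  have hsub : ({j, k} : Finset (Fin ℓ)) ⊆ ({m | a m ≠ z m} : Finset (Fin ℓ)) := by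
    intro m hm
    simp only [Finset.mem_insert, Finset.mem_singleton] at hm
    rcases hm with rfl | rfl <;>
      simp only [Finset.mem_filter, Finset.mem_univ, true_and]
    · exact hj
    · exact hk
  have hcard : ({j, k} : Finset (Fin ℓ)).card = 2 := Finset.card_pair hjk
  have heq : ({j, k} : Finset (Fin ℓ)) = ({m | a m ≠ z m} : Finset (Fin ℓ)) :=
    Finset.eq_of_subset_of_card_le hsub (by rw [hcard]; exact h2)
  funext m
  rcases eq_or_ne m k with rfl | hmk
  · rw [Function.update_self]
  rcases eq_or_ne m j with rfl | hmj
  · rw [Function.update_of_ne hmk, Function.update_self]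
  · rw [Function.update_of_ne hmk, Function.update_of_ne hmj]
    by_contra hne
    have : m ∈ ({j, k} : Finset (Fin ℓ)) := by
      rw [heq]
      simp only [Finset.mem_filter, Finset.mem_univ, true_and]
      exact fun h => hne h.symm
    simp only [Finset.mem_insert, Finset.mem_singleton] at this
    tauto

lemma S_closed (j k : Fin ℓ) (cj ck : Fin 2) :
    bootStep (gridAdj 2 ℓ) 2 {x | x j = cj ∧ x k = ck} = {x | x j = cj ∧ x k = ck} := by
  have : ({x | x j = cj ∧ x k = ck} : Set (Fin ℓ → Fin 2)) =
      {x | x j = cj} ∩ {x | x k = ck} := rfl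
  rw [this]
  exact bootStep_inter_closed (fixcoord_closed j cj) (fixcoord_closed k ck)

lemma proj2_image_closure {j k : Fin ℓ} (cj ck : Fin 2) (X : Set (Fin ℓ → Fin 2)) :
    (fun x => Function.update (Function.update x j cj) k ck) '' (bootClosure (gridAdj 2 ℓ) 2 X)
      ⊆ bootClosure (gridAdj 2 ℓ) 2
        ((fun x => Function.update (Function.update x j cj) k ck) '' X) := by
  have hcomp : ∀ Y : Set (Fin ℓ → Fin 2),
      (fun x => Function.update (Function.update x j cj) k ck) '' Y =
        (fun z => Function.update z k ck) '' ((fun z => Function.update z j cj) '' Y) := by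
    intro Y
    rw [Set.image_image]
  rw [hcomp, hcomp]
  calc (fun z => Function.update z k ck) ''
        ((fun z => Function.update z j cj) '' bootClosure (gridAdj 2 ℓ) 2 X)
      ⊆ (fun z => Function.update z k ck) ''
        (bootClosure (gridAdj 2 ℓ) 2 ((fun z => Function.update z j cj) '' X)) :=
        Set.image_mono (proj_bootClosure j cj X)
    _ ⊆ _ := proj_bootClosure k ck _

/-- The one-coordinate-difference exclusion: the unique point of `A` outside `S`
cannot agree with `S` in coordinate `k`. -/
lemma exclusion {j k : Fin ℓ} (hjk : j ≠ k) {cj ck : Fin 2}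
    {A : Set (Fin ℓ → Fin 2)} {a : Fin ℓ → Fin 2}
    (hspan : bootClosure (gridAdj 2 ℓ) 2 A = Set.univ)
    (hBS : A \ {x | x j = cj ∧ x k = ck} = {a})
    (hak : a k = ck) : False := by
  set S : Set (Fin ℓ → Fin 2) := {x | x j = cj ∧ x k = ck} with hSdef
  set π : (Fin ℓ → Fin 2) → (Fin ℓ → Fin 2) := fun x => Function.update x j cj with hπ
  have hπA : π '' A ⊆ S := by
    rintro _ ⟨x, hx, rfl⟩
    by_cases hxS : x ∈ S
    · constructor
      · show Function.update x j cj j = cj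
        rw [Function.update_self]
      · show Function.update x j cj k = ck
        rw [Function.update_of_ne (Ne.symm hjk)]
        exact hxS.2
    · have : x = a := by
        have : x ∈ A \ S := ⟨hx, hxS⟩
        rwa [hBS, Set.mem_singleton_iff] at this
      subst this
      constructor
      · show Function.update x j cj j = cj
        rw [Function.update_self]
      · show Function.update x j cj k = ck
        rw [Function.update_of_ne (Ne.symm hjk)]
        exact hak
  have hclS : bootClosure (gridAdj 2 ℓ) 2 (π '' A) ⊆ S :=
    bootClosure_subset_of_closed hπA (S_closed j k cj ck)
  -- the point `y` below is in the image of π but not in S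
  set y : Fin ℓ → Fin 2 := Function.update (Function.update a j cj) k (ck + 1) with hy
  have hyj : y j = cj := by
    rw [hy, Function.update_of_ne hjk, Function.update_self]
  have hyk : y k = ck + 1 := by rw [hy, Function.update_self]
  have hyπ : y ∈ π '' (bootClosure (gridAdj 2 ℓ) 2 A) := by
    rw [hspan]
    refine ⟨y, Set.mem_univ _, ?_⟩
    rw [hπ, ← hyj]
    exact Function.update_eq_self _ _
  have hyS : y ∈ S := hclS (proj_bootClosure j cj A hyπ)
  have := hyS.2
  rw [hyk] at this
  exact fin2_add_one_ne ck this

/-- Core of Part 1. -/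
lemma part1_core {j k : Fin ℓ} (hjk : j ≠ k) (cj ck : Fin 2)
    {A : Set (Fin ℓ → Fin 2)}
    (hspan : bootClosure (gridAdj 2 ℓ) 2 A = Set.univ)
    (hone : (A \ {x | x j = cj ∧ x k = ck}).ncard = 1) :
    bootClosure (gridAdj 2 ℓ) 2 (A ∩ {x | x j = cj ∧ x k = ck}) =
      {x | x j = cj ∧ x k = ck} ∧
    ∀ a ∈ A \ {x | x j = cj ∧ x k = ck}, a j ≠ cj ∧ a k ≠ ck := by
  set S : Set (Fin ℓ → Fin 2) := {x | x j = cj ∧ x k = ck} with hSdef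
  obtain ⟨a, ha⟩ := Set.ncard_eq_one.mp hone
  have haA : a ∈ A := by
    have : a ∈ A \ S := ha ▸ rfl
    exact this.1
  have haS : a ∉ S := by
    have : a ∈ A \ S := ha ▸ rfl
    exact this.2
  -- the unique outside point differs from S in both coordinates
  have hdiff : a j ≠ cj ∧ a k ≠ ck := by
    constructor
    · intro haj
      have hBS' : A \ {x | x k = ck ∧ x j = cj} = {a} := by
        have : ({x | x k = ck ∧ x j = cj} : Set (Fin ℓ → Fin 2)) = S := by
          ext x; exact and_comm
        rw [this]; exact ha
      exact exclusion (Ne.symm hjk) hspan hBS' haj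
    · intro hak
      exact exclusion hjk hspan ha hak
  have hdiffall : ∀ b ∈ A \ S, b j ≠ cj ∧ b k ≠ ck := by
    intro b hb
    rw [ha, Set.mem_singleton_iff] at hb
    exact hb ▸ hdiff
  refine ⟨?_, hdiffall⟩
  set B : Set (Fin ℓ → Fin 2) := A ∩ S with hBdef
  set T : Set (Fin ℓ → Fin 2) := bootClosure (gridAdj 2 ℓ) 2 B with hTdef
  have hTS : T ⊆ S := bootClosure_subset_of_closed Set.inter_subset_right (S_closed j k cj ck)
  have hAeq : A = B ∪ {a} := by
    ext x
    constructor
    · intro hx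
      by_cases hxS : x ∈ S
      · exact Or.inl ⟨hx, hxS⟩
      · right
        have : x ∈ A \ S := ⟨hx, hxS⟩
        rwa [ha] at this
    · rintro (hx | hx)
      · exact hx.1
      · rw [Set.mem_singleton_iff] at hx
        exact hx ▸ haA
  set p : Fin ℓ → Fin 2 := Function.update (Function.update a j cj) k ck with hp
  have hpS : p ∈ S := by
    constructor
    · rw [hp, Function.update_of_ne hjk, Function.update_self]
    · rw [hp, Function.update_self]
  -- key claim: p belongs to T
  have hpT : p ∈ T := by
    by_contra hpT
    -- then T ∪ {a} is closed
    have hclosed : bootStep (gridAdj 2 ℓ) 2 (T ∪ {a}) = T ∪ {a} := by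
      refine le_antisymm ?_ (subset_bootStep _)
      rintro v (hv | hv)
      · exact hv
      · by_contra hv'
        simp only [Set.mem_setOf_eq] at hv
        obtain ⟨u₁, hu₁, u₂, hu₂, hne⟩ := (Set.one_lt_ncard (Set.toFinite _)).mp
          (lt_of_lt_of_le one_lt_two hv)
        have key : ∀ u, u ∈ T → gridAdj 2 ℓ v u → gridAdj 2 ℓ v a → False := by
          intro u huT hadju hadja
          have h1 : hammingDist a u ≤ 2 := by
            calc hammingDist a u ≤ hammingDist a v + hammingDist v u :=
                  hammingDist_triangle _ _ _
              _ ≤ 2 := by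
                  have e1 : hammingDist a v = 1 := by
                    rw [hammingDist_comm]
                    exact gridAdj_hammingDist hadja
                  have e2 : hammingDist v u = 1 := gridAdj_hammingDist hadju
                  omega
          have huS : u ∈ S := hTS huT
          have hu_eq : u = Function.update (Function.update a j (u j)) k (u k) :=
            eq_proj_of_hamming_le_two hjk (huS.1 ▸ hdiff.1) (huS.2 ▸ hdiff.2) h1
          have : u = p := by
            rw [hu_eq, huS.1, huS.2]
          exact hpT (this ▸ huT)
        rcases hu₁.2 with hu₁T | hu₁a
        · rcases hu₂.2 with hu₂T | hu₂a
          · -- both in T: v would be infected inside T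
            have : v ∈ bootStep (gridAdj 2 ℓ) 2 T := by
              refine Or.inr ?_
              have hsub : ({u₁, u₂} : Set (Fin ℓ → Fin 2)) ⊆
                  {u | gridAdj 2 ℓ v u ∧ u ∈ T} := by
                rintro u (rfl | rfl)
                · exact ⟨hu₁.1, hu₁T⟩
                · exact ⟨hu₂.1, hu₂T⟩
              calc (2:ℕ) = ({u₁, u₂} : Set (Fin ℓ → Fin 2)).ncard := (Set.ncard_pair hne).symm
                _ ≤ _ := Set.ncard_le_ncard hsub (Set.toFinite _)
            rw [hTdef, bootStep_bootClosure] at this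
            exact hv' (Or.inl this)
          · rw [Set.mem_singleton_iff] at hu₂a
            subst hu₂a
            exact key u₁ hu₁T hu₁.1 hu₂.1
        · rw [Set.mem_singleton_iff] at hu₁a
          subst hu₁a
          rcases hu₂.2 with hu₂T | hu₂a
          · exact key u₂ hu₂T hu₂.1 hu₁.1
          · rw [Set.mem_singleton_iff] at hu₂a
            exact hne (hu₂a ▸ rfl)
    have huniv : (Set.univ : Set (Fin ℓ → Fin 2)) ⊆ T ∪ {a} := by
      rw [← hspan, hAeq]
      refine bootClosure_subset_of_closed ?_ hclosed
      exact Set.union_subset_union_left _ (subset_bootClosure _)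
    set x₀ : Fin ℓ → Fin 2 := Function.update a k ck with hx₀
    have := huniv (Set.mem_univ x₀)
    rcases this with hx₀T | hx₀a
    · have : x₀ ∈ S := hTS hx₀T
      have hj' : x₀ j = a j := Function.update_of_ne hjk _ _
      exact hdiff.1 (hj' ▸ this.1)
    · rw [Set.mem_singleton_iff] at hx₀a
      have : x₀ k = a k := by rw [hx₀a]
      rw [hx₀, Function.update_self] at this
      exact hdiff.2 this.symm
  -- now finish via the two-coordinate projection
  set π2 : (Fin ℓ → Fin 2) → (Fin ℓ → Fin 2) :=
    fun x => Function.update (Function.update x j cj) k ck with hπ2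
  have hπ2self : ∀ x ∈ S, π2 x = x := by
    intro x hx
    rw [hπ2]
    show Function.update (Function.update x j cj) k ck = x
    rw [← hx.1, Function.update_eq_self, ← hx.2, Function.update_eq_self]
  have hπ2A : π2 '' A ⊆ B ∪ {p} := by
    rintro _ ⟨x, hx, rfl⟩
    by_cases hxS : x ∈ S
    · rw [hπ2self x hxS]
      exact Or.inl ⟨hx, hxS⟩
    · have : x = a := by
        have : x ∈ A \ S := ⟨hx, hxS⟩
        rwa [ha, Set.mem_singleton_iff] at this
      subst this
      exact Or.inr rfl
  have hSsub : S ⊆ bootClosure (gridAdj 2 ℓ) 2 (B ∪ {p}) := by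
    intro s hs
    have hsπ : s ∈ π2 '' (bootClosure (gridAdj 2 ℓ) 2 A) := by
      rw [hspan]
      exact ⟨s, Set.mem_univ _, hπ2self s hs⟩
    have h2 : bootClosure (gridAdj 2 ℓ) 2 (π2 '' A) ⊆ bootClosure (gridAdj 2 ℓ) 2 (B ∪ {p}) :=
      bootClosure_subset_of_closed (hπ2A.trans (subset_bootClosure _)) (bootStep_bootClosure _)
    exact h2 (proj2_image_closure (j := j) (k := k) cj ck A hsπ)
  have hfinal : bootClosure (gridAdj 2 ℓ) 2 (B ∪ {p}) = T := by
    have h1 : bootClosure (gridAdj 2 ℓ) 2 (B ∪ {p}) =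
        bootClosure (gridAdj 2 ℓ) 2 (T ∪ {p}) := by
      rw [hTdef, bootClosure_closure_union]
    have h2 : T ∪ {p} = T := Set.union_eq_self_of_subset_right (by
      rw [Set.singleton_subset_iff]; exact hpT)
    rw [h1, h2, hTdef, bootClosure_idem]
  rw [hfinal] at hSsub
  exact le_antisymm hTS hSsub

lemma cubeDim_univ : cubeDim (Set.univ : Set (Fin ℓ → Fin 2)) = ℓ := by
  unfold cubeDim
  have h : ∀ i : Fin ℓ, ((fun x => x i) '' (Set.univ : Set (Fin ℓ → Fin 2))).ncard = 2 := by
    intro i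
    rw [Set.image_univ]
    have : Set.range (fun x : Fin ℓ → Fin 2 => x i) = Set.univ :=
      Set.eq_univ_of_forall fun v => ⟨fun _ => v, rfl⟩
    rw [this, Set.ncard_univ]
    simp
  simp only [h]
  simp

lemma bootClosure_singleton (a : Fin ℓ → Fin 2) :
    bootClosure (gridAdj 2 ℓ) 2 ({a} : Set (Fin ℓ → Fin 2)) = {a} :=
  le_antisymm (bootClosure_subset_of_closed le_rfl (bootStep_singleton le_rfl a))
    (subset_bootClosure _)

lemma gsd_le {x z : Fin ℓ → Fin 2} {T : Set (Fin ℓ → Fin 2)} (hz : z ∈ T) :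
    gridSetDist 2 ℓ x T ≤ (gridGraph 2 ℓ).dist x z :=
  Nat.sInf_le ⟨z, hz, rfl⟩

lemma gsd_attained {x : Fin ℓ → Fin 2} {T : Set (Fin ℓ → Fin 2)} (hT : T.Nonempty) :
    ∃ z ∈ T, (gridGraph 2 ℓ).dist x z = gridSetDist 2 ℓ x T := by
  have := Nat.sInf_mem (hT.image (fun y => (gridGraph 2 ℓ).dist x y))
  obtain ⟨z, hz, he⟩ := this
  exact ⟨z, hz, he⟩

lemma gsd_singleton (x z : Fin ℓ → Fin 2) :
    gridSetDist 2 ℓ x {z} = (gridGraph 2 ℓ).dist x z := by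
  unfold gridSetDist
  rw [Set.image_singleton, csInf_singleton]

lemma proj2_self {j k : Fin ℓ} {cj ck : Fin 2} {x : Fin ℓ → Fin 2}
    (h1 : x j = cj) (h2 : x k = ck) :
    Function.update (Function.update x j cj) k ck = x := by
  rw [← h1, Function.update_eq_self, ← h2, Function.update_eq_self]

lemma attained_eq_p {j k : Fin ℓ} (hjk : j ≠ k) {cj ck : Fin 2} {astar z : Fin ℓ → Fin 2}
    (hj : astar j ≠ cj) (hk : astar k ≠ ck) (hzj : z j = cj) (hzk : z k = ck)
    (hdist : (gridGraph 2 ℓ).dist astar z = 2) :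
    z = Function.update (Function.update astar j cj) k ck := by
  rw [grid_dist_eq_hamming] at hdist
  have h1 : astar j ≠ z j := by rw [hzj]; exact hj
  have h2 : astar k ≠ z k := by rw [hzk]; exact hk
  have := eq_proj_of_hamming_le_two hjk h1 h2 hdist.le
  rwa [hzj, hzk] at this

/-- The key distance-transfer lemma for Part 2. -/
lemma gsd_transfer {j k : Fin ℓ} (hjk : j ≠ k) {cj ck : Fin 2}
    {x : Fin ℓ → Fin 2} (hxj : x j = cj) (hxk : x k = ck)
    {W Z : Set (Fin ℓ → Fin 2)} (hZW : Z ⊆ W) (hZne : Z.Nonempty)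
    (hπW : (fun y => Function.update (Function.update y j cj) k ck) '' W ⊆
      bootClosure (gridAdj 2 ℓ) 2 Z)
    (hd : gridSetDist 2 ℓ x (bootClosure (gridAdj 2 ℓ) 2 W) = 2) :
    gridSetDist 2 ℓ x (bootClosure (gridAdj 2 ℓ) 2 Z) = 2 := by
  have hWne : W.Nonempty := hZne.mono hZW
  have hclWne : (bootClosure (gridAdj 2 ℓ) 2 W).Nonempty :=
    hWne.mono (subset_bootClosure _)
  have hclZne : (bootClosure (gridAdj 2 ℓ) 2 Z).Nonempty :=
    hZne.mono (subset_bootClosure _)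
  have hlow : ∀ z' ∈ bootClosure (gridAdj 2 ℓ) 2 Z, 2 ≤ (gridGraph 2 ℓ).dist x z' := by
    intro z' hz'
    have hz'W : z' ∈ bootClosure (gridAdj 2 ℓ) 2 W := bootClosure_mono hZW hz'
    calc (2:ℕ) = gridSetDist 2 ℓ x (bootClosure (gridAdj 2 ℓ) 2 W) := hd.symm
      _ ≤ _ := gsd_le hz'W
  obtain ⟨z, hz, hzd⟩ := gsd_attained (x := x) hclWne
  rw [hd] at hzd
  set πz : Fin ℓ → Fin 2 := Function.update (Function.update z j cj) k ck with hπz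
  have hπzZ : πz ∈ bootClosure (gridAdj 2 ℓ) 2 Z := by
    have h1 : πz ∈ (fun y => Function.update (Function.update y j cj) k ck) ''
        (bootClosure (gridAdj 2 ℓ) 2 W) := ⟨z, hz, rfl⟩
    have h2 := proj2_image_closure (j := j) (k := k) cj ck W h1
    exact bootClosure_subset_of_closed hπW (bootStep_bootClosure _) h2
  have hdle : (gridGraph 2 ℓ).dist x πz ≤ 2 := by
    rw [grid_dist_eq_hamming]
    calc hammingDist x πz
        = hammingDist (Function.update (Function.update x j cj) k ck) πz := by
          rw [proj2_self hxj hxk]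
      _ ≤ hammingDist (Function.update x j cj) (Function.update z j cj) :=
          hammingDist_update_update_le _ _ _ _
      _ ≤ hammingDist x z := hammingDist_update_update_le _ _ _ _
      _ = 2 := by rw [← grid_dist_eq_hamming]; exact hzd
  have hge : 2 ≤ gridSetDist 2 ℓ x (bootClosure (gridAdj 2 ℓ) 2 Z) := by
    obtain ⟨z0, hz0, hz0d⟩ := gsd_attained (x := x) hclZne
    rw [← hz0d]
    exact hlow z0 hz0
  have hle : gridSetDist 2 ℓ x (bootClosure (gridAdj 2 ℓ) 2 Z) ≤ 2 :=
    (gsd_le hπzZ).trans hdle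
  omega

lemma p_mem_closure {j k : Fin ℓ} (hjk : j ≠ k) {cj ck : Fin 2} {astar : Fin ℓ → Fin 2}
    (hj : astar j ≠ cj) (hk : astar k ≠ ck) {W0 : Set (Fin ℓ → Fin 2)}
    (hW0S : W0 ⊆ {x | x j = cj ∧ x k = ck}) (hW0ne : W0.Nonempty)
    (hd0 : gridSetDist 2 ℓ astar (bootClosure (gridAdj 2 ℓ) 2 W0) = 2) :
    Function.update (Function.update astar j cj) k ck ∈ bootClosure (gridAdj 2 ℓ) 2 W0 := by
  have hclS : bootClosure (gridAdj 2 ℓ) 2 W0 ⊆ {x | x j = cj ∧ x k = ck} :=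
    bootClosure_subset_of_closed hW0S (S_closed j k cj ck)
  have hclne : (bootClosure (gridAdj 2 ℓ) 2 W0).Nonempty := hW0ne.mono (subset_bootClosure _)
  obtain ⟨z, hz, hzd⟩ := gsd_attained (x := astar) hclne
  rw [hd0] at hzd
  have hzS := hclS hz
  have hze := attained_eq_p hjk hj hk hzS.1 hzS.2 hzd
  exact hze ▸ hz

lemma succAbove_val {n : ℕ} (p : Fin (n+1)) (m : Fin n) :
    ((p.succAbove m : Fin (n+1)) : ℕ) = if (m:ℕ) < (p:ℕ) then (m:ℕ) else (m:ℕ)+1 := by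
  rcases lt_or_ge ((m:ℕ)) ((p:ℕ)) with h | h
  · rw [Fin.succAbove_of_castSucc_lt _ _ (by rw [Fin.lt_def]; simpa), if_pos h,
      Fin.coe_castSucc]
  · rw [Fin.succAbove_of_le_castSucc _ _ (by rw [Fin.le_def]; simpa), if_neg (not_lt.mpr h),
      Fin.val_succ]

lemma succAbove_image_lt' {t' : ℕ} (jstar : Fin (t'+2)) (i : ℕ)
    (hcase : i + 1 < (jstar : ℕ)) (hi : i + 1 ≤ t') :
    jstar.succAbove '' {m : Fin (t'+1) | (m:ℕ) ≤ i} = {m' : Fin (t'+2) | (m':ℕ) ≤ i} := by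
  ext m'
  simp only [Set.mem_image, Set.mem_setOf_eq]
  constructor
  · rintro ⟨m, hm, rfl⟩
    have hv := succAbove_val jstar m
    rw [if_pos (by omega)] at hv
    omega
  · intro hm'
    refine ⟨⟨(m':ℕ), by omega⟩, by simpa using hm', ?_⟩
    apply Fin.ext
    rw [succAbove_val]
    simp only [Fin.val_mk]
    rw [if_pos (by omega)]

lemma succAbove_image_ge {t' : ℕ} (jstar : Fin (t'+2)) (i : ℕ)
    (hcase : (jstar : ℕ) ≤ i + 1) (hi : i + 1 ≤ t') :
    jstar.succAbove '' {m : Fin (t'+1) | (m:ℕ) ≤ i} =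
      {m' : Fin (t'+2) | ((m':ℕ) ≤ i+1) ∧ m' ≠ jstar} := by
  ext m'
  simp only [Set.mem_image, Set.mem_setOf_eq]
  constructor
  · rintro ⟨m, hm, rfl⟩
    have hv := succAbove_val jstar m
    constructor
    · split at hv <;> omega
    · exact Fin.succAbove_ne jstar m
  · rintro ⟨h1, h2⟩
    have h2v : (m':ℕ) ≠ (jstar:ℕ) := fun h => h2 (Fin.ext h)
    by_cases h : (m' : ℕ) < (jstar : ℕ)
    · refine ⟨⟨(m':ℕ), by omega⟩, by simp; omega, ?_⟩
      apply Fin.ext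
      rw [succAbove_val]
      simp only [Fin.val_mk]
      rw [if_pos (by omega)]
    · refine ⟨⟨(m':ℕ) - 1, by omega⟩, by simp; omega, ?_⟩
      apply Fin.ext
      rw [succAbove_val]
      simp only [Fin.val_mk]
      rw [if_neg (by omega)]
      omega

end Grid

set_option maxHeartbeats 2000000 in
/-- If `A` spans `Q = [2]^ℓ` and `S` is an `(ℓ-2)`-dimensional
subcube with `|A ∖ S| = 1`, then `A ∩ S` spans `S`; moreover sequential spanning
is inherited. -/
theorem spanned_subcube_codim_two {ℓ : ℕ} (hℓ : 2 ≤ ℓ) (A : Set (Fin ℓ → Fin 2))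
    (hspan : bootClosure (gridAdj 2 ℓ) 2 A = Set.univ)
    (S : Set (Fin ℓ → Fin 2)) (hS : IsCube S) (hdim : cubeDim S + 2 = ℓ)
    (hone : (A \ S).ncard = 1) :
    IntSpans 2 ℓ A S ∧
      (SeqSpans 2 ℓ A Set.univ → SeqSpans 2 ℓ (A ∩ S) S) := by
  obtain ⟨j, k, cj, ck, hjk, hSeq⟩ := cube_two_fixed hS hdim
  subst hSeq
  set S : Set (Fin ℓ → Fin 2) := {x | x j = cj ∧ x k = ck} with hSdef
  obtain ⟨hcl, hdiffall⟩ := part1_core hjk cj ck hspan hone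
  refine ⟨hcl, ?_⟩
  rintro ⟨t, htdim, hAsub, hAcard, hAcl, a, hainj, harange, hadist⟩
  have hℓ2t : ℓ = 2 * t := by rw [← cubeDim_univ (ℓ := ℓ)]; exact htdim
  obtain ⟨t', rfl⟩ : ∃ t'', t = t'' + 1 := ⟨t - 1, by omega⟩
  -- the unique point of A outside S
  obtain ⟨astar, ha⟩ := Set.ncard_eq_one.mp hone
  have hamem : astar ∈ A \ S := by rw [ha]; rfl
  have haA : astar ∈ A := hamem.1
  have haS : astar ∉ S := hamem.2
  have hAS' : A ∩ S = A \ {astar} := by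
    ext x
    constructor
    · rintro ⟨hxA, hxS⟩
      refine ⟨hxA, fun hx => ?_⟩
      rw [Set.mem_singleton_iff] at hx
      exact haS (hx ▸ hxS)
    · rintro ⟨hxA, hxne⟩
      refine ⟨hxA, ?_⟩
      by_contra hxS
      have : x ∈ A \ S := ⟨hxA, hxS⟩
      rw [ha] at this
      exact hxne this
  have hdiff : astar j ≠ cj ∧ astar k ≠ ck := hdiffall astar hamem
  -- the index of astar
  have haA' : astar ∈ Set.range a := harange ▸ haA
  obtain ⟨jstar, hjs⟩ := haA'
  have hSmem : ∀ m : Fin (t'+2), m ≠ jstar → a m ∈ S := by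
    intro m hm
    by_contra hmS
    have h1 : a m ∈ A \ S := ⟨harange ▸ Set.mem_range_self m, hmS⟩
    rw [ha, Set.mem_singleton_iff] at h1
    exact hm (hainj (h1.trans hjs.symm))
  set p : Fin ℓ → Fin 2 := Function.update (Function.update astar j cj) k ck with hpdef
  refine ⟨t', by omega, Set.inter_subset_right, ?_, hcl,
    fun m => a (jstar.succAbove m), ?_, ?_, ?_⟩
  · -- cardinality
    rw [hAS', Set.ncard_diff_singleton_of_mem haA, hAcard]
    omega
  · -- injectivity
    intro m₁ m₂ h
    exact Fin.succAbove_right_injective (hainj h)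
  · -- range
    have h1 : Set.range (fun m => a (jstar.succAbove m)) =
        a '' Set.range jstar.succAbove := Set.range_comp a jstar.succAbove
    rw [h1, Fin.range_succAbove, hAS']
    ext y
    simp only [Set.mem_image, Set.mem_compl_iff, Set.mem_singleton_iff, Set.mem_diff]
    constructor
    · rintro ⟨m, hm, rfl⟩
      exact ⟨harange ▸ Set.mem_range_self m, fun h => hm (hainj (h.trans hjs.symm))⟩
    · rintro ⟨hyA, hyne⟩
      rw [← harange] at hyA
      obtain ⟨m, rfl⟩ := hyA
      exact ⟨m, fun h => hyne (by rw [h, hjs]), rfl⟩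
  · -- the distance conditions
    intro i
    show gridSetDist 2 ℓ (a (jstar.succAbove i.succ)) (bootClosure (gridAdj 2 ℓ) 2
      ((fun m => a (jstar.succAbove m)) '' {m : Fin (t'+1) | (m:ℕ) ≤ (i:ℕ)})) = 2
    rw [← Set.image_image a jstar.succAbove]
    by_cases hcase : ((i:ℕ)+1) < (jstar:ℕ)
    · -- early steps: identical to the original sequence
      have hbsucc : jstar.succAbove i.succ = (⟨(i:ℕ)+1, by omega⟩ : Fin (t'+2)) := by
        apply Fin.ext
        rw [succAbove_val, Fin.val_succ, if_pos (by omega)]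
      have himg := succAbove_image_lt' jstar (i:ℕ) hcase (by omega)
      rw [hbsucc, himg]
      have hjj : (⟨(i:ℕ), by omega⟩ : Fin (t'+1)).succ = (⟨(i:ℕ)+1, by omega⟩ : Fin (t'+2)) := by
        apply Fin.ext
        simp
      have h2 := hadist ⟨(i:ℕ), by omega⟩
      rw [hjj] at h2
      exact h2
    · -- later steps: transfer across the deleted point
      push_neg at hcase
      have hbsucc : jstar.succAbove i.succ = (⟨(i:ℕ)+2, by omega⟩ : Fin (t'+2)) := by
        apply Fin.ext
        rw [succAbove_val, Fin.val_succ, if_neg (by omega)]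
      have himg := succAbove_image_ge jstar (i:ℕ) hcase (by omega)
      rw [hbsucc, himg]
      set Z : Set (Fin ℓ → Fin 2) :=
        a '' {m' : Fin (t'+2) | ((m':ℕ) ≤ (i:ℕ)+1) ∧ m' ≠ jstar} with hZ
      set W : Set (Fin ℓ → Fin 2) := a '' {m' : Fin (t'+2) | (m':ℕ) ≤ (i:ℕ)+1} with hW
      -- the current point is in S
      have hxne : (⟨(i:ℕ)+2, by omega⟩ : Fin (t'+2)) ≠ jstar := by
        intro h
        have := congrArg Fin.val h
        simp only [Fin.val_mk] at this
        omega
      have hxS : a ⟨(i:ℕ)+2, by omega⟩ ∈ S := hSmem _ hxne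
      -- p belongs to the closure of Z
      have hpZ : p ∈ bootClosure (gridAdj 2 ℓ) 2 Z := by
        by_cases hj0 : (jstar:ℕ) = 0
        · -- jstar = 0 : p = a 1
          have h0 : a '' {m : Fin (t'+2) | (m:ℕ) ≤ ((⟨0, by omega⟩ : Fin (t'+1)):ℕ)} =
              {astar} := by
            have hset : {m : Fin (t'+2) | (m:ℕ) ≤ ((⟨0, by omega⟩ : Fin (t'+1)):ℕ)} =
                {jstar} := by
              ext m
              simp only [Set.mem_setOf_eq, Set.mem_singleton_iff, Fin.val_mk]
              constructor
              · intro h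
                apply Fin.ext
                omega
              · rintro rfl
                omega
            rw [hset, Set.image_singleton, hjs]
          have hd0 := hadist ⟨0, by omega⟩
          rw [h0, bootClosure_singleton] at hd0
          have hsucc1 : (⟨0, by omega⟩ : Fin (t'+1)).succ = (⟨1, by omega⟩ : Fin (t'+2)) := by
            apply Fin.ext; simp
          rw [hsucc1] at hd0
          rw [gsd_singleton] at hd0
          have h1ne : (⟨1, by omega⟩ : Fin (t'+2)) ≠ jstar := by
            intro h
            have := congrArg Fin.val h
            simp only [Fin.val_mk] at this
            omega
          have h1S : a ⟨1, by omega⟩ ∈ S := hSmem _ h1ne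
          have hpa1 : a ⟨1, by omega⟩ = p :=
            attained_eq_p hjk hdiff.1 hdiff.2 h1S.1 h1S.2 (by rw [SimpleGraph.dist_comm]; exact hd0)
          rw [← hpa1]
          refine subset_bootClosure _ ⟨⟨1, by omega⟩, ⟨by simp, h1ne⟩, rfl⟩
        · -- jstar ≥ 1 : p is in the closure of the first jstar points
          have hd0 := hadist ⟨(jstar:ℕ)-1, by omega⟩
          have hsucc : (⟨(jstar:ℕ)-1, by omega⟩ : Fin (t'+1)).succ = jstar := by
            apply Fin.ext
            simp
            omega
          rw [hsucc, hjs] at hd0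
          refine bootClosure_mono ?_ (p_mem_closure hjk hdiff.1 hdiff.2 ?_ ?_ hd0)
          · rintro _ ⟨m, hm, rfl⟩
            simp only [Set.mem_setOf_eq, Fin.val_mk] at hm
            exact ⟨m, ⟨by omega, fun h => by rw [h] at hm; omega⟩, rfl⟩
          · rintro _ ⟨m, hm, rfl⟩
            simp only [Set.mem_setOf_eq, Fin.val_mk] at hm
            refine hSmem m (fun h => ?_)
            rw [h] at hm
            omega
          · exact ⟨a ⟨0, by omega⟩, ⟨0, by omega⟩, by simp, rfl⟩
      -- apply the transfer lemma
      have hZW : Z ⊆ W := Set.image_mono (fun m hm => hm.1)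
      have hZne : Z.Nonempty := by
        by_cases hj0 : (jstar:ℕ) = 0
        · exact ⟨a ⟨1, by omega⟩, ⟨1, by omega⟩, ⟨by simp, fun h => by
            have := congrArg Fin.val h; simp only [Fin.val_mk] at this; omega⟩, rfl⟩
        · exact ⟨a ⟨0, by omega⟩, ⟨0, by omega⟩, ⟨by simp, fun h => by
            have := congrArg Fin.val h; simp only [Fin.val_mk] at this; omega⟩, rfl⟩
      have hπW : (fun y => Function.update (Function.update y j cj) k ck) '' W ⊆
          bootClosure (gridAdj 2 ℓ) 2 Z := by
        rintro _ ⟨w, ⟨m, hm, rfl⟩, rfl⟩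
        simp only [Set.mem_setOf_eq] at hm
        by_cases hmj : m = jstar
        · subst hmj
          rw [hjs]
          exact hpZ
        · have hmS : a m ∈ S := hSmem m hmj
          show Function.update (Function.update (a m) j cj) k ck ∈ _
          rw [proj2_self hmS.1 hmS.2]
          exact subset_bootClosure _ ⟨m, ⟨hm, hmj⟩, rfl⟩
      have hd : gridSetDist 2 ℓ (a ⟨(i:ℕ)+2, by omega⟩)
          (bootClosure (gridAdj 2 ℓ) 2 W) = 2 := by
        have h2 := hadist ⟨(i:ℕ)+1, by omega⟩
        have hsucc : (⟨(i:ℕ)+1, by omega⟩ : Fin (t'+1)).succ =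
            (⟨(i:ℕ)+2, by omega⟩ : Fin (t'+2)) := by
          apply Fin.ext
          simp
        rw [hsucc] at h2
        exact h2
      exact gsd_transfer hjk hxS.1 hxS.2 hZW hZne hπW hd
end

section
/- Let Q ⊆ [n]^d be a cube with dim(Q) ≥ 1, and suppose Q is internally spanned by A ⊆ [n]^d. Then there exist proper subcubes S, T ⊊ Q and disjoint sets A_1, A_2 ⊆ A ∩ Q such that [A_1] = S, [A_2] = T, and [S ∪ T] = Q. -/
namespace BPaux

variable {n d : ℕ}

/-- A product-of-intervals box. -/
def Box {n d : ℕ} (lo hi : Fin d → Fin n) : Set (Fin d → Fin n) :=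
  {x | ∀ i, lo i ≤ x i ∧ x i ≤ hi i}

/-- Closed under 2-neighbour bootstrap percolation. -/
def Closed (n d : ℕ) (C : Set (Fin d → Fin n)) : Prop :=
  ∀ v, 2 ≤ {u | gridAdj n d v u ∧ u ∈ C}.ncard → v ∈ C

noncomputable abbrev cl (n d : ℕ) (A : Set (Fin d → Fin n)) : Set (Fin d → Fin n) :=
  bootClosure (gridAdj n d) 2 A

lemma subset_bootStep {V : Type*} (adj : V → V → Prop) (r : ℕ) (A : Set V) :
    A ⊆ bootStep adj r A := Set.subset_union_left

lemma bootStep_mono {V : Type*} [Finite V] (adj : V → V → Prop) (r : ℕ) {A B : Set V}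
    (h : A ⊆ B) : bootStep adj r A ⊆ bootStep adj r B := by
  rintro x (hx | hx)
  · exact Or.inl (h hx)
  · right
    refine le_trans hx (Set.ncard_le_ncard ?_ (Set.toFinite _))
    rintro u ⟨h1, h2⟩; exact ⟨h1, h h2⟩

lemma subset_bootClosure {V : Type*} (adj : V → V → Prop) (r : ℕ) (A : Set V) :
    A ⊆ bootClosure adj r A := by
  intro x hx
  exact Set.mem_iUnion.2 ⟨0, hx⟩

lemma bootClosure_mono {V : Type*} [Finite V] (adj : V → V → Prop) (r : ℕ) {A B : Set V}
    (h : A ⊆ B) : bootClosure adj r A ⊆ bootClosure adj r B := by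
  refine Set.iUnion_subset fun t => ?_
  refine le_trans ?_ (Set.subset_iUnion _ t)
  induction t with
  | zero => exact h
  | succ k ih =>
    rw [Function.iterate_succ_apply', Function.iterate_succ_apply']
    exact bootStep_mono adj r ih

lemma iterate_le_iterate {V : Type*} (adj : V → V → Prop) (r : ℕ) (A : Set V)
    {s t : ℕ} (h : s ≤ t) : (bootStep adj r)^[s] A ⊆ (bootStep adj r)^[t] A := by
  obtain ⟨k, rfl⟩ := Nat.exists_eq_add_of_le h
  clear h
  induction k with
  | zero => simp
  | succ m ih =>
    have : s + (m + 1) = (s + m) + 1 := by ring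
    rw [this, Function.iterate_succ_apply']
    exact le_trans ih (subset_bootStep adj r _)

lemma exists_fixed_iterate (A : Set (Fin d → Fin n)) :
    ∃ t, (bootStep (gridAdj n d) 2)^[t+1] A = (bootStep (gridAdj n d) 2)^[t] A := by
  by_contra h
  push_neg at h
  have key : ∀ t, t ≤ ((bootStep (gridAdj n d) 2)^[t] A).ncard := by
    intro t
    induction t with
    | zero => exact Nat.zero_le _
    | succ k ih =>
      have hsub : (bootStep (gridAdj n d) 2)^[k] A ⊆ (bootStep (gridAdj n d) 2)^[k+1] A := by
        rw [Function.iterate_succ_apply']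
        exact subset_bootStep _ _ _
      have hlt : ((bootStep (gridAdj n d) 2)^[k] A).ncard
          < ((bootStep (gridAdj n d) 2)^[k+1] A).ncard :=
        Set.ncard_lt_ncard (ssubset_of_subset_of_ne hsub (fun e => h k e.symm)) (Set.toFinite _)
      omega
  have h1 := key (Fintype.card (Fin d → Fin n) + 1)
  have h2 : ((bootStep (gridAdj n d) 2)^[Fintype.card (Fin d → Fin n) + 1] A).ncard
      ≤ Fintype.card (Fin d → Fin n) := by
    have := Set.ncard_le_ncard (Set.subset_univ
      ((bootStep (gridAdj n d) 2)^[Fintype.card (Fin d → Fin n) + 1] A)) (Set.toFinite _)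
    simpa [Set.ncard_univ, Nat.card_eq_fintype_card] using this
  omega

lemma closure_eq_iterate (A : Set (Fin d → Fin n)) :
    ∃ t, cl n d A = (bootStep (gridAdj n d) 2)^[t] A ∧
      bootStep (gridAdj n d) 2 ((bootStep (gridAdj n d) 2)^[t] A)
        = (bootStep (gridAdj n d) 2)^[t] A := by
  obtain ⟨t, ht⟩ := exists_fixed_iterate A
  rw [Function.iterate_succ_apply'] at ht
  have stable : ∀ s, t ≤ s → (bootStep (gridAdj n d) 2)^[s] A
      = (bootStep (gridAdj n d) 2)^[t] A := by
    intro s hs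
    obtain ⟨k, rfl⟩ := Nat.exists_eq_add_of_le hs
    induction k with
    | zero => rfl
    | succ m ih =>
      have h1 : t + (m + 1) = (t + m) + 1 := by ring
      rw [h1, Function.iterate_succ_apply', ih (Nat.le_add_right _ _), ht]
  refine ⟨t, ?_, ht⟩
  apply subset_antisymm
  · refine Set.iUnion_subset fun s => ?_
    rcases le_total s t with h | h
    · exact iterate_le_iterate _ _ _ h
    · rw [stable s h]
  · exact Set.subset_iUnion (fun s => (bootStep (gridAdj n d) 2)^[s] A) t

lemma closed_cl (A : Set (Fin d → Fin n)) : Closed n d (cl n d A) := by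
  obtain ⟨t, hcl, hfix⟩ := closure_eq_iterate A
  intro v hv
  rw [hcl] at hv ⊢
  have : v ∈ bootStep (gridAdj n d) 2 ((bootStep (gridAdj n d) 2)^[t] A) := Or.inr hv
  rwa [hfix] at this

lemma bootStep_eq_of_closed {C : Set (Fin d → Fin n)} (hC : Closed n d C) :
    bootStep (gridAdj n d) 2 C = C := by
  apply subset_antisymm
  · rintro v (hv | hv)
    · exact hv
    · exact hC v hv
  · exact subset_bootStep _ _ _

lemma cl_subset_of_closed {A C : Set (Fin d → Fin n)} (hAC : A ⊆ C) (hC : Closed n d C) :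
    cl n d A ⊆ C := by
  refine Set.iUnion_subset fun t => ?_
  induction t with
  | zero => exact hAC
  | succ k ih =>
    rw [Function.iterate_succ_apply']
    refine le_trans (bootStep_mono _ _ ih) ?_
    rw [bootStep_eq_of_closed hC]

lemma cl_cl_union (X Y : Set (Fin d → Fin n)) :
    cl n d (cl n d X ∪ cl n d Y) = cl n d (X ∪ Y) := by
  apply subset_antisymm
  · refine cl_subset_of_closed ?_ (closed_cl _)
    exact Set.union_subset (bootClosure_mono _ _ Set.subset_union_left)
      (bootClosure_mono _ _ Set.subset_union_right)
  · exact bootClosure_mono _ _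
      (Set.union_subset_union (subset_bootClosure _ _ _) (subset_bootClosure _ _ _))

lemma cl_eq_of_closed {C : Set (Fin d → Fin n)} (hC : Closed n d C) : cl n d C = C :=
  subset_antisymm (cl_subset_of_closed le_rfl hC) (subset_bootClosure _ _ _)

/-! ### Boxes -/

lemma box_nonempty {lo hi : Fin d → Fin n} (h : ∀ i, lo i ≤ hi i) :
    lo ∈ Box lo hi := fun i => ⟨le_refl _, h i⟩

lemma box_nbr_unique {lo hi : Fin d → Fin n} {v u u' : Fin d → Fin n}
    (hv : v ∉ Box lo hi) (hu : u ∈ Box lo hi) (hu' : u' ∈ Box lo hi)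
    (h1 : gridAdj n d v u) (h2 : gridAdj n d v u') : u = u' := by
  obtain ⟨i0, hi0⟩ : ∃ i, ¬((lo i : ℕ) ≤ v i ∧ (v i : ℕ) ≤ hi i) := by
    by_contra hc
    push_neg at hc
    exact hv fun i => ⟨Fin.le_def.2 (hc i).1, Fin.le_def.2 (hc i).2⟩
  obtain ⟨i, hiadj, hioth⟩ := h1
  obtain ⟨i', h2a, h2o⟩ := h2
  have hii : i = i0 := by
    by_contra hne
    have hvu : v i0 = u i0 := hioth i0 (fun e => hne e.symm)
    have hb := hu i0
    rw [← hvu] at hb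
    exact hi0 ⟨Fin.le_def.1 hb.1, Fin.le_def.1 hb.2⟩
  have hii' : i' = i0 := by
    by_contra hne
    have hvu : v i0 = u' i0 := h2o i0 (fun e => hne e.symm)
    have hb := hu' i0
    rw [← hvu] at hb
    exact hi0 ⟨Fin.le_def.1 hb.1, Fin.le_def.1 hb.2⟩
  rw [hii] at hiadj hioth
  rw [hii'] at h2a h2o
  funext j
  by_cases hj : j = i0
  · subst hj
    have b1a : (lo j : ℕ) ≤ u j := Fin.le_def.1 (hu j).1
    have b1b : (u j : ℕ) ≤ hi j := Fin.le_def.1 (hu j).2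
    have b2a : (lo j : ℕ) ≤ u' j := Fin.le_def.1 (hu' j).1
    have b2b : (u' j : ℕ) ≤ hi j := Fin.le_def.1 (hu' j).2
    exact Fin.val_injective (by omega)
  · rw [← hioth j hj, ← h2o j hj]

lemma closed_box (lo hi : Fin d → Fin n) : Closed n d (Box lo hi) := by
  intro v hv
  by_contra hvout
  have h2 : 1 < {u | gridAdj n d v u ∧ u ∈ Box lo hi}.ncard := hv
  obtain ⟨u, u', hu, hu', hne⟩ := (Set.one_lt_ncard_iff (Set.toFinite _)).1 h2
  exact hne (box_nbr_unique hvout hu.2 hu'.2 hu.1 hu'.1)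

lemma mem_of_two_nbrs {C : Set (Fin d → Fin n)} {v u w : Fin d → Fin n}
    (hC : Closed n d C) (hu : u ∈ C) (hw : w ∈ C) (hne : u ≠ w)
    (h1 : gridAdj n d v u) (h2 : gridAdj n d v w) : v ∈ C := by
  apply hC
  have h2' : 1 < {x | gridAdj n d v x ∧ x ∈ C}.ncard :=
    (Set.one_lt_ncard_iff (Set.toFinite _)).2 ⟨u, w, ⟨h1, hu⟩, ⟨h2, hw⟩, hne⟩
  omega

/-! ### Distances -/

/-- `ℓ¹` distance between vertices (as `ℕ`, with truncated subtraction trick). -/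
def ndist {n d : ℕ} (x y : Fin d → Fin n) : ℕ :=
  ∑ i, (((x i : ℕ) - y i) + ((y i : ℕ) - x i))

/-- Sum of coordinatewise gaps between two boxes. -/
def gapSum {n d : ℕ} (lS hS lT hT : Fin d → Fin n) : ℕ :=
  ∑ i, (((lT i : ℕ) - hS i) + ((lS i : ℕ) - hT i))

lemma sum_split (f : Fin d → ℕ) (j : Fin d) :
    ∑ k, f k = f j + ∑ k ∈ Finset.univ.erase j, f k :=
  (Finset.add_sum_erase _ _ (Finset.mem_univ j)).symm

lemma ndist_eq_zero {x y : Fin d → Fin n} (h : ndist x y = 0) : x = y := by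
  funext i
  rw [ndist, Finset.sum_eq_zero_iff] at h
  have := h i (Finset.mem_univ i)
  exact Fin.val_injective (by omega)

lemma ndist_le_one_of_adj {x y : Fin d → Fin n} (h : gridAdj n d x y) : ndist x y ≤ 1 := by
  obtain ⟨i, hadj, hoth⟩ := h
  rw [ndist, sum_split _ i]
  have h0 : ∑ k ∈ Finset.univ.erase i, (((x k : ℕ) - y k) + ((y k : ℕ) - x k)) = 0 := by
    refine Finset.sum_eq_zero fun k hk => ?_
    rw [hoth k (Finset.mem_erase.1 hk).1]
    omega
  omega

lemma ndist_triangle (x y z : Fin d → Fin n) : ndist x z ≤ ndist x y + ndist y z := by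
  rw [ndist, ndist, ndist, ← Finset.sum_add_distrib]
  exact Finset.sum_le_sum fun i _ => by omega

lemma gapSum_le_ndist {lS hS lT hT : Fin d → Fin n} {u u' : Fin d → Fin n}
    (hu : u ∈ Box lS hS) (hu' : u' ∈ Box lT hT) :
    gapSum lS hS lT hT ≤ ndist u u' := by
  rw [gapSum, ndist]
  refine Finset.sum_le_sum fun i _ => ?_
  have b1 : (lS i : ℕ) ≤ u i ∧ (u i : ℕ) ≤ hS i := ⟨(hu i).1, (hu i).2⟩
  have b2 : (lT i : ℕ) ≤ u' i ∧ (u' i : ℕ) ≤ hT i := ⟨(hu' i).1, (hu' i).2⟩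
  omega

lemma adj_update (x : Fin d → Fin n) (j : Fin d) (m : Fin n)
    (h : (x j : ℕ) + 1 = m ∨ (m : ℕ) + 1 = x j) :
    gridAdj n d x (Function.update x j m) := by
  refine ⟨j, ?_, fun k hk => ?_⟩
  · rw [Function.update_self]; exact h
  · rw [Function.update_of_ne hk]

lemma val_min (a b : Fin n) : ((min a b : Fin n) : ℕ) = min (a : ℕ) (b : ℕ) := by
  rcases le_total a b with h | h
  · rw [min_eq_left h, min_eq_left (Fin.le_def.1 h)]
  · rw [min_eq_right h, min_eq_right (Fin.le_def.1 h)]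

lemma val_max (a b : Fin n) : ((max a b : Fin n) : ℕ) = max (a : ℕ) (b : ℕ) := by
  rcases le_total a b with h | h
  · rw [max_eq_right h, max_eq_right (Fin.le_def.1 h)]
  · rw [max_eq_left h, max_eq_left (Fin.le_def.1 h)]

/-! ### Slab filling -/

lemma slab_fill {C : Set (Fin d → Fin n)} (hC : Closed n d C) {lo hi : Fin d → Fin n}
    (hS : Box lo hi ⊆ C) (i : Fin d) (c : Fin n) (e : Fin n)
    (helo : (lo i : ℕ) ≤ e) (hehi : (e : ℕ) ≤ hi i)
    (hce : (e : ℕ) + 1 = c ∨ (c : ℕ) + 1 = e)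
    (xs : Fin d → Fin n) (hxs : xs ∈ C) (hxsi : xs i = c)
    (hxsb : ∀ j, j ≠ i → (lo j : ℕ) ≤ xs j ∧ (xs j : ℕ) ≤ hi j) :
    ∀ x, x i = c → (∀ j, j ≠ i → (lo j : ℕ) ≤ x j ∧ (x j : ℕ) ≤ hi j) → x ∈ C := by
  have aux : ∀ N x, ndist x xs ≤ N → x i = c →
      (∀ j, j ≠ i → (lo j : ℕ) ≤ x j ∧ (x j : ℕ) ≤ hi j) → x ∈ C := by
    intro N
    induction N with
    | zero =>
      intro x h0 _ _
      rw [Nat.le_zero] at h0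
      rwa [ndist_eq_zero h0]
    | succ N ih =>
      intro x hnd hxi hxb
      by_cases hxx : x = xs
      · rwa [hxx]
      · obtain ⟨j, hj⟩ : ∃ j, x j ≠ xs j := by
          by_contra hc
          push_neg at hc
          exact hxx (funext hc)
        have hji : j ≠ i := by
          intro e'
          rw [e', hxi, hxsi] at hj
          exact hj rfl
        have hjval : (x j : ℕ) ≠ (xs j : ℕ) := fun e' => hj (Fin.val_injective e')
        have hm : ∃ m : Fin n, ((x j : ℕ) + 1 = m ∨ (m : ℕ) + 1 = x j) ∧
            (((m : ℕ) - xs j) + ((xs j : ℕ) - m)) + 1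
              = ((x j : ℕ) - xs j) + ((xs j : ℕ) - x j) ∧
            (((x j : ℕ) ≤ m ∧ (m : ℕ) ≤ xs j) ∨ ((xs j : ℕ) ≤ m ∧ (m : ℕ) ≤ x j)) := by
          rcases lt_or_gt_of_ne hjval with h | h
          · have hb1 : (x j : ℕ) + 1 < n := by have := (xs j).isLt; omega
            refine ⟨⟨(x j : ℕ) + 1, hb1⟩, Or.inl rfl, ?_, ?_⟩ <;>
              · simp only [Fin.val_mk]; omega
          · have hb2 : (x j : ℕ) - 1 < n := by have := (x j).isLt; omega
            refine ⟨⟨(x j : ℕ) - 1, hb2⟩, Or.inr ?_, ?_, ?_⟩ <;>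
              · simp only [Fin.val_mk]; omega
        obtain ⟨m, hm1, hm2, hm3⟩ := hm
        set x' := Function.update x j m with hx'
        have hadj : gridAdj n d x x' := adj_update x j m hm1
        have hx'i : x' i = c := by
          rw [hx', Function.update_of_ne (fun e' => hji e'.symm)]
          exact hxi
        have hx'b : ∀ k, k ≠ i → (lo k : ℕ) ≤ x' k ∧ (x' k : ℕ) ≤ hi k := by
          intro k hk
          by_cases hkj : k = j
          · subst hkj
            rw [hx', Function.update_self]
            have b1 := hxb k hk
            have b2 := hxsb k hk
            omega
          · rw [hx', Function.update_of_ne hkj]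
            exact hxb k hk
        have hndd : ndist x' xs ≤ N := by
          have e1 : ndist x xs = ((x j : ℕ) - xs j + ((xs j : ℕ) - x j)) +
              ∑ k ∈ Finset.univ.erase j, (((x k : ℕ) - xs k) + ((xs k : ℕ) - x k)) :=
            sum_split _ j
          have e2 : ndist x' xs = ((x' j : ℕ) - xs j + ((xs j : ℕ) - x' j)) +
              ∑ k ∈ Finset.univ.erase j, (((x' k : ℕ) - xs k) + ((xs k : ℕ) - x' k)) :=
            sum_split _ j
          have e3 : ∑ k ∈ Finset.univ.erase j, (((x' k : ℕ) - xs k) + ((xs k : ℕ) - x' k))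
              = ∑ k ∈ Finset.univ.erase j, (((x k : ℕ) - xs k) + ((xs k : ℕ) - x k)) := by
            refine Finset.sum_congr rfl fun k hk => ?_
            rw [hx', Function.update_of_ne (Finset.mem_erase.1 hk).1]
          have e4 : x' j = m := by rw [hx', Function.update_self]
          rw [e4] at e2
          omega
        have hx'C : x' ∈ C := ih x' hndd hx'i hx'b
        have hy : Function.update x i e ∈ Box lo hi := by
          intro k
          by_cases hk : k = i
          · subst hk
            rw [Function.update_self]
            exact ⟨Fin.le_def.2 helo, Fin.le_def.2 hehi⟩
          · rw [Function.update_of_ne hk]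
            exact ⟨Fin.le_def.2 (hxb k hk).1, Fin.le_def.2 (hxb k hk).2⟩
        have hadjy : gridAdj n d x (Function.update x i e) := by
          refine adj_update x i e ?_
          rw [hxi]
          omega
        have hneq : x' ≠ Function.update x i e := by
          intro hcontr
          have h1 : x' i = c := hx'i
          have h2 : Function.update x i e i = e := Function.update_self _ _ _
          rw [hcontr, h2] at h1
          rw [h1] at hce
          omega
        exact mem_of_two_nbrs hC hx'C (hS hy) hneq hadj hadjy
  intro x hx1 hx2
  exact aux (ndist x xs) x le_rfl hx1 hx2

/-! ### Growing boxes -/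

lemma mem_box {lo hi x : Fin d → Fin n} :
    x ∈ Box lo hi ↔ ∀ i, (lo i : ℕ) ≤ x i ∧ (x i : ℕ) ≤ hi i :=
  ⟨fun h i => ⟨Fin.le_def.1 (h i).1, Fin.le_def.1 (h i).2⟩,
   fun h i => ⟨Fin.le_def.2 (h i).1, Fin.le_def.2 (h i).2⟩⟩

/-- Deficiency measure of `S` relative to the bounding box of `S` and `T`. -/
def defSum {n d : ℕ} (lS hS lT hT : Fin d → Fin n) : ℕ :=
  ∑ i, (((hT i : ℕ) - (hS i : ℕ)) + ((lS i : ℕ) - (lT i : ℕ)))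

lemma grow_step_up {C : Set (Fin d → Fin n)} (hC : Closed n d C) {lS hS lT hT : Fin d → Fin n}
    (hSb : ∀ k, (lS k : ℕ) ≤ hS k) (hTb : ∀ k, (lT k : ℕ) ≤ hT k)
    (hgap : gapSum lS hS lT hT ≤ 2)
    (hSC : Box lS hS ⊆ C) (hTC : Box lT hT ⊆ C)
    (i : Fin d) (hup : (hS i : ℕ) < hT i)
    (hcase : (hS i : ℕ) < lT i ∨ gapSum lS hS lT hT = 0) :
    ∃ hS' : Fin d → Fin n,
      (∀ k, (lS k : ℕ) ≤ hS' k) ∧ Box lS hS' ⊆ C ∧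
      gapSum lS hS' lT hT ≤ 2 ∧
      (∀ k, max (hS' k) (hT k) = max (hS k) (hT k)) ∧
      defSum lS hS' lT hT + 1 = defSum lS hS lT hT := by
  have hcn : (hS i : ℕ) + 1 < n := by have := (hT i).isLt; omega
  set c : Fin n := ⟨(hS i : ℕ) + 1, hcn⟩ with hcdef
  have hcval : (c : ℕ) = (hS i : ℕ) + 1 := rfl
  set p : Fin d → Fin n := fun k => min (hS k) (max (lS k) (lT k)) with hpdef
  have hpval : ∀ k, (p k : ℕ) = min (hS k : ℕ) (max (lS k : ℕ) (lT k : ℕ)) := by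
    intro k; rw [hpdef]; rw [val_min, val_max]
  have hpS : ∀ k, (lS k : ℕ) ≤ p k ∧ (p k : ℕ) ≤ hS k := by
    intro k; rw [hpval k]; have := hSb k; have := hTb k; omega
  set xs : Fin d → Fin n := Function.update p i c with hxsdef
  have hxsi : xs i = c := Function.update_self _ _ _
  have hxsk : ∀ k, k ≠ i → xs k = p k := fun k hk => Function.update_of_ne hk _ _
  -- the distance from the seed to T
  set tD : Fin d → ℕ := fun k => ((lT k : ℕ) - (xs k : ℕ)) + ((xs k : ℕ) - (hT k : ℕ))
    with htDdef
  set g : Fin d → ℕ := fun k => ((lT k : ℕ) - (hS k : ℕ)) + ((lS k : ℕ) - (hT k : ℕ))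
    with hgdef
  have hgap' : ∑ k, g k ≤ 2 := hgap
  have hgapSum : gapSum lS hS lT hT = ∑ k, g k := rfl
  have htD_eq : ∀ k, k ≠ i → tD k = g k := by
    intro k hk
    rw [htDdef, hgdef]
    simp only
    rw [hxsk k hk, hpval k]
    have := hSb k; have := hTb k
    omega
  have hrest : ∑ k ∈ Finset.univ.erase i, tD k = ∑ k ∈ Finset.univ.erase i, g k :=
    Finset.sum_congr rfl fun k hk => htD_eq k (Finset.mem_erase.1 hk).1
  have hDsplit : ∑ k, tD k = tD i + ∑ k ∈ Finset.univ.erase i, g k := by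
    rw [sum_split tD i, hrest]
  have hgsplit : ∑ k, g k = g i + ∑ k ∈ Finset.univ.erase i, g k := sum_split g i
  have htDi : tD i = ((lT i : ℕ) - (c : ℕ)) + ((c : ℕ) - (hT i : ℕ)) := by
    rw [htDdef]; simp only; rw [hxsi]
  have hD1 : ∑ k, tD k ≤ 1 := by
    rcases hcase with hcase | hcase
    · have hgi : 1 ≤ g i := by rw [hgdef]; simp only; omega
      have : tD i + 1 = g i := by
        rw [htDi, hgdef]; simp only
        have := hSb i; have := hTb i
        omega
      omega
    · have hc2 := hcase
      rw [hgapSum, hgsplit] at hc2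
      have hgi0 : g i = 0 ∧ ∑ k ∈ Finset.univ.erase i, g k = 0 := by omega
      have : tD i = 0 := by
        rw [htDi]
        have hgi := hgi0.1
        simp only [hgdef] at hgi
        have := hSb i; have := hTb i
        omega
      omega
  -- the seed is infected
  have hseed : xs ∈ C := by
    rcases Nat.eq_zero_or_pos (∑ k, tD k) with hD0 | hDpos
    · -- seed is in T
      refine hTC (mem_box.2 fun k => ?_)
      have := (Finset.sum_eq_zero_iff.1 hD0) k (Finset.mem_univ k)
      rw [htDdef] at this; simp only at this
      have := hTb k
      omega
    · have hDone : ∑ k, tD k = 1 := by omega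
      obtain ⟨j, hj⟩ : ∃ j, tD j ≠ 0 := by
        by_contra hcon
        push_neg at hcon
        rw [Finset.sum_eq_zero fun k _ => hcon k] at hDone
        omega
      have hsplitj : ∑ k, tD k = tD j + ∑ k ∈ Finset.univ.erase j, tD k := sum_split tD j
      have htdj : tD j = 1 := by
        have h0 : 0 ≤ ∑ k ∈ Finset.univ.erase j, tD k := Nat.zero_le _
        omega
      have hothers : ∀ k, k ≠ j → tD k = 0 := by
        intro k hk
        have hz : ∑ k ∈ Finset.univ.erase j, tD k = 0 := by omega
        exact Finset.sum_eq_zero_iff.1 hz k (Finset.mem_erase.2 ⟨hk, Finset.mem_univ k⟩)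
      set m : Fin n := min (hT j) (max (lT j) (xs j)) with hmdef
      have hmval : (m : ℕ) = min (hT j : ℕ) (max (lT j : ℕ) (xs j : ℕ)) := by
        rw [hmdef]; rw [val_min, val_max]
      have htdj' : ((lT j : ℕ) - (xs j : ℕ)) + ((xs j : ℕ) - (hT j : ℕ)) = 1 := htdj
      have hmT : (lT j : ℕ) ≤ m ∧ (m : ℕ) ≤ hT j := by
        rw [hmval]; have := hTb j; omega
      have hadjm : (xs j : ℕ) + 1 = m ∨ (m : ℕ) + 1 = xs j := by
        rw [hmval]; have := hTb j; omega
      set y : Fin d → Fin n := Function.update xs j m with hydef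
      have hy : y ∈ Box lT hT := by
        refine mem_box.2 fun k => ?_
        by_cases hk : k = j
        · subst hk; rw [hydef, Function.update_self]; exact hmT
        · rw [hydef, Function.update_of_ne hk]
          have := hothers k hk
          rw [htDdef] at this; simp only at this
          have := hTb k
          omega
      have hadjy : gridAdj n d xs y := adj_update xs j m hadjm
      set y2 : Fin d → Fin n := Function.update xs i (hS i) with hy2def
      have hy2 : y2 ∈ Box lS hS := by
        refine mem_box.2 fun k => ?_
        by_cases hk : k = i
        · subst hk; rw [hy2def, Function.update_self]
          exact ⟨hSb k, le_refl _⟩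
        · rw [hy2def, Function.update_of_ne hk, hxsk k hk]
          exact hpS k
      have hadjy2 : gridAdj n d xs y2 := by
        refine adj_update xs i (hS i) (Or.inr ?_)
        rw [hxsi, hcval]
      have hne : y ≠ y2 := by
        intro hcon
        by_cases hji : j = i
        · subst hji
          have h1 : y j = m := Function.update_self _ _ _
          have h2 : y2 j = hS j := Function.update_self _ _ _
          rw [hcon, h2] at h1
          have hgapup : (hS j : ℕ) < lT j := by
            rcases hcase with hcase | hcase
            · exact hcase
            · exfalso
              have hc2 := hcase
              rw [hgapSum, hgsplit] at hc2
              have hgj : g j = 0 := by omega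
              simp only [hgdef] at hgj
              rw [htDi] at htdj
              have := hTb j; have := hSb j
              omega
          have hv : (hS j : ℕ) = m := congrArg Fin.val h1
          have hxv : (xs j : ℕ) = (hS j : ℕ) + 1 := by rw [hxsi, hcval]
          rw [hmval] at hv
          have := hTb j
          omega
        · have h1 : y j = m := Function.update_self _ _ _
          have h2 : y2 j = xs j := by rw [hy2def, Function.update_of_ne hji]
          rw [hcon, h2] at h1
          have hv : (xs j : ℕ) = m := congrArg Fin.val h1
          omega
      exact mem_of_two_nbrs hC (hTC hy) (hSC hy2) hne hadjy hadjy2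
  -- now fill in the slab and extend the box
  refine ⟨Function.update hS i c, ?_, ?_, ?_, ?_, ?_⟩
  · intro k
    by_cases hk : k = i
    · subst hk; rw [Function.update_self, hcval]
      have := hSb k; omega
    · rw [Function.update_of_ne hk]; exact hSb k
  · intro x hx
    rw [mem_box] at hx
    by_cases hxi : (x i : ℕ) ≤ hS i
    · refine hSC (mem_box.2 fun k => ?_)
      by_cases hk : k = i
      · subst hk; exact ⟨(hx k).1, hxi⟩
      · have := hx k
        rwa [Function.update_of_ne hk] at this
    · have hxic : x i = c := by
        have := (hx i).2
        rw [Function.update_self] at this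
        exact Fin.val_injective (by rw [hcval]; omega)
      refine slab_fill hC hSC i c (hS i) (hSb i) (le_refl _) (Or.inl hcval) xs hseed hxsi
        (fun j hj => by rw [hxsk j hj]; exact hpS j) x hxic
        (fun j hj => by have := hx j; rwa [Function.update_of_ne hj] at this)
  · refine le_trans (Finset.sum_le_sum fun k _ => ?_) hgap
    by_cases hk : k = i
    · subst hk; rw [Function.update_self, hcval]
      omega
    · rw [Function.update_of_ne hk]
  · intro k
    by_cases hk : k = i
    · subst hk
      rw [Function.update_self]
      rw [max_eq_right (Fin.le_def.2 (by rw [hcval]; omega : (c : ℕ) ≤ hT k)),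
        max_eq_right (Fin.le_def.2 (le_of_lt hup))]
    · rw [Function.update_of_ne hk]
  · rw [defSum, defSum, sum_split _ i, sum_split
      (fun k => ((hT k : ℕ) - (hS k : ℕ)) + ((lS k : ℕ) - (lT k : ℕ))) i]
    have he : ∑ k ∈ Finset.univ.erase i,
        (((hT k : ℕ) - ((Function.update hS i c) k : ℕ)) + ((lS k : ℕ) - (lT k : ℕ)))
        = ∑ k ∈ Finset.univ.erase i, (((hT k : ℕ) - (hS k : ℕ)) + ((lS k : ℕ) - (lT k : ℕ))) := by
      refine Finset.sum_congr rfl fun k hk => ?_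
      rw [Function.update_of_ne (Finset.mem_erase.1 hk).1]
    rw [he, Function.update_self, hcval]
    omega

lemma grow_step_down {C : Set (Fin d → Fin n)} (hC : Closed n d C) {lS hS lT hT : Fin d → Fin n}
    (hSb : ∀ k, (lS k : ℕ) ≤ hS k) (hTb : ∀ k, (lT k : ℕ) ≤ hT k)
    (hgap : gapSum lS hS lT hT ≤ 2)
    (hSC : Box lS hS ⊆ C) (hTC : Box lT hT ⊆ C)
    (i : Fin d) (hdown : (lT i : ℕ) < lS i)
    (hcase : (hT i : ℕ) < lS i ∨ gapSum lS hS lT hT = 0) :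
    ∃ lS' : Fin d → Fin n,
      (∀ k, (lS' k : ℕ) ≤ hS k) ∧ Box lS' hS ⊆ C ∧
      gapSum lS' hS lT hT ≤ 2 ∧
      (∀ k, min (lS' k) (lT k) = min (lS k) (lT k)) ∧
      defSum lS' hS lT hT + 1 = defSum lS hS lT hT := by
  have hcn : (lS i : ℕ) - 1 < n := by have := (lS i).isLt; omega
  set c : Fin n := ⟨(lS i : ℕ) - 1, hcn⟩ with hcdef
  have hcval : (c : ℕ) = (lS i : ℕ) - 1 := rfl
  set p : Fin d → Fin n := fun k => min (hS k) (max (lS k) (lT k)) with hpdef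
  have hpval : ∀ k, (p k : ℕ) = min (hS k : ℕ) (max (lS k : ℕ) (lT k : ℕ)) := by
    intro k; rw [hpdef]; rw [val_min, val_max]
  have hpS : ∀ k, (lS k : ℕ) ≤ p k ∧ (p k : ℕ) ≤ hS k := by
    intro k; rw [hpval k]; have := hSb k; have := hTb k; omega
  set xs : Fin d → Fin n := Function.update p i c with hxsdef
  have hxsi : xs i = c := Function.update_self _ _ _
  have hxsk : ∀ k, k ≠ i → xs k = p k := fun k hk => Function.update_of_ne hk _ _
  set tD : Fin d → ℕ := fun k => ((lT k : ℕ) - (xs k : ℕ)) + ((xs k : ℕ) - (hT k : ℕ))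
    with htDdef
  set g : Fin d → ℕ := fun k => ((lT k : ℕ) - (hS k : ℕ)) + ((lS k : ℕ) - (hT k : ℕ))
    with hgdef
  have hgap' : ∑ k, g k ≤ 2 := hgap
  have hgapSum : gapSum lS hS lT hT = ∑ k, g k := rfl
  have htD_eq : ∀ k, k ≠ i → tD k = g k := by
    intro k hk
    rw [htDdef, hgdef]
    simp only
    rw [hxsk k hk, hpval k]
    have := hSb k; have := hTb k
    omega
  have hrest : ∑ k ∈ Finset.univ.erase i, tD k = ∑ k ∈ Finset.univ.erase i, g k :=
    Finset.sum_congr rfl fun k hk => htD_eq k (Finset.mem_erase.1 hk).1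
  have hDsplit : ∑ k, tD k = tD i + ∑ k ∈ Finset.univ.erase i, g k := by
    rw [sum_split tD i, hrest]
  have hgsplit : ∑ k, g k = g i + ∑ k ∈ Finset.univ.erase i, g k := sum_split g i
  have htDi : tD i = ((lT i : ℕ) - (c : ℕ)) + ((c : ℕ) - (hT i : ℕ)) := by
    rw [htDdef]; simp only; rw [hxsi]
  have hD1 : ∑ k, tD k ≤ 1 := by
    rcases hcase with hcase | hcase
    · have hgi : 1 ≤ g i := by rw [hgdef]; simp only; omega
      have : tD i + 1 = g i := by
        rw [htDi, hgdef]; simp only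
        have := hSb i; have := hTb i
        omega
      omega
    · have hc2 := hcase
      rw [hgapSum, hgsplit] at hc2
      have hgi0 : g i = 0 ∧ ∑ k ∈ Finset.univ.erase i, g k = 0 := by omega
      have : tD i = 0 := by
        rw [htDi]
        have hgi := hgi0.1
        simp only [hgdef] at hgi
        have := hSb i; have := hTb i
        omega
      omega
  have hseed : xs ∈ C := by
    rcases Nat.eq_zero_or_pos (∑ k, tD k) with hD0 | hDpos
    · refine hTC (mem_box.2 fun k => ?_)
      have := (Finset.sum_eq_zero_iff.1 hD0) k (Finset.mem_univ k)
      rw [htDdef] at this; simp only at this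
      have := hTb k
      omega
    · have hDone : ∑ k, tD k = 1 := by omega
      obtain ⟨j, hj⟩ : ∃ j, tD j ≠ 0 := by
        by_contra hcon
        push_neg at hcon
        rw [Finset.sum_eq_zero fun k _ => hcon k] at hDone
        omega
      have hsplitj : ∑ k, tD k = tD j + ∑ k ∈ Finset.univ.erase j, tD k := sum_split tD j
      have htdj : tD j = 1 := by
        have h0 : 0 ≤ ∑ k ∈ Finset.univ.erase j, tD k := Nat.zero_le _
        omega
      have hothers : ∀ k, k ≠ j → tD k = 0 := by
        intro k hk
        have hz : ∑ k ∈ Finset.univ.erase j, tD k = 0 := by omega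
        exact Finset.sum_eq_zero_iff.1 hz k (Finset.mem_erase.2 ⟨hk, Finset.mem_univ k⟩)
      set m : Fin n := min (hT j) (max (lT j) (xs j)) with hmdef
      have hmval : (m : ℕ) = min (hT j : ℕ) (max (lT j : ℕ) (xs j : ℕ)) := by
        rw [hmdef]; rw [val_min, val_max]
      have htdj' : ((lT j : ℕ) - (xs j : ℕ)) + ((xs j : ℕ) - (hT j : ℕ)) = 1 := htdj
      have hmT : (lT j : ℕ) ≤ m ∧ (m : ℕ) ≤ hT j := by
        rw [hmval]; have := hTb j; omega
      have hadjm : (xs j : ℕ) + 1 = m ∨ (m : ℕ) + 1 = xs j := by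
        rw [hmval]; have := hTb j; omega
      set y : Fin d → Fin n := Function.update xs j m with hydef
      have hy : y ∈ Box lT hT := by
        refine mem_box.2 fun k => ?_
        by_cases hk : k = j
        · subst hk; rw [hydef, Function.update_self]; exact hmT
        · rw [hydef, Function.update_of_ne hk]
          have := hothers k hk
          rw [htDdef] at this; simp only at this
          have := hTb k
          omega
      have hadjy : gridAdj n d xs y := adj_update xs j m hadjm
      set y2 : Fin d → Fin n := Function.update xs i (lS i) with hy2def
      have hy2 : y2 ∈ Box lS hS := by
        refine mem_box.2 fun k => ?_
        by_cases hk : k = i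
        · subst hk; rw [hy2def, Function.update_self]
          exact ⟨le_refl _, hSb k⟩
        · rw [hy2def, Function.update_of_ne hk, hxsk k hk]
          exact hpS k
      have hadjy2 : gridAdj n d xs y2 := by
        refine adj_update xs i (lS i) (Or.inl ?_)
        rw [hxsi, hcval]
        omega
      have hne : y ≠ y2 := by
        intro hcon
        by_cases hji : j = i
        · subst hji
          have h1 : y j = m := Function.update_self _ _ _
          have h2 : y2 j = lS j := Function.update_self _ _ _
          rw [hcon, h2] at h1
          have hgapdown : (hT j : ℕ) < lS j := by
            rcases hcase with hcase | hcase
            · exact hcase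
            · exfalso
              have hc2 := hcase
              rw [hgapSum, hgsplit] at hc2
              have hgj : g j = 0 := by omega
              simp only [hgdef] at hgj
              rw [htDi] at htdj
              have := hTb j; have := hSb j
              omega
          have hv : (lS j : ℕ) = m := congrArg Fin.val h1
          rw [hmval] at hv
          have := hTb j
          omega
        · have h1 : y j = m := Function.update_self _ _ _
          have h2 : y2 j = xs j := by rw [hy2def, Function.update_of_ne hji]
          rw [hcon, h2] at h1
          have hv : (xs j : ℕ) = m := congrArg Fin.val h1
          omega
      exact mem_of_two_nbrs hC (hTC hy) (hSC hy2) hne hadjy hadjy2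
  refine ⟨Function.update lS i c, ?_, ?_, ?_, ?_, ?_⟩
  · intro k
    by_cases hk : k = i
    · subst hk; rw [Function.update_self, hcval]
      have := hSb k; omega
    · rw [Function.update_of_ne hk]; exact hSb k
  · intro x hx
    rw [mem_box] at hx
    by_cases hxi : (lS i : ℕ) ≤ x i
    · refine hSC (mem_box.2 fun k => ?_)
      by_cases hk : k = i
      · subst hk; exact ⟨hxi, (hx k).2⟩
      · have := hx k
        rwa [Function.update_of_ne hk] at this
    · have hxic : x i = c := by
        have := (hx i).1
        rw [Function.update_self] at this
        exact Fin.val_injective (by rw [hcval]; omega)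
      refine slab_fill hC hSC i c (lS i) (le_refl _) (hSb i) (Or.inr (by rw [hcval]; omega))
        xs hseed hxsi
        (fun j hj => by rw [hxsk j hj]; exact hpS j) x hxic
        (fun j hj => by have := hx j; rwa [Function.update_of_ne hj] at this)
  · refine le_trans (Finset.sum_le_sum fun k _ => ?_) hgap
    by_cases hk : k = i
    · subst hk; rw [Function.update_self, hcval]
      omega
    · rw [Function.update_of_ne hk]
  · intro k
    by_cases hk : k = i
    · subst hk
      rw [Function.update_self]
      rw [min_eq_right (Fin.le_def.2 (by rw [hcval]; omega : (lT k : ℕ) ≤ c)),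
        min_eq_right (Fin.le_def.2 (le_of_lt hdown))]
    · rw [Function.update_of_ne hk]
  · rw [defSum, defSum, sum_split _ i, sum_split
      (fun k => ((hT k : ℕ) - (hS k : ℕ)) + ((lS k : ℕ) - (lT k : ℕ))) i]
    have he : ∑ k ∈ Finset.univ.erase i,
        (((hT k : ℕ) - (hS k : ℕ)) + (((Function.update lS i c) k : ℕ) - (lT k : ℕ)))
        = ∑ k ∈ Finset.univ.erase i, (((hT k : ℕ) - (hS k : ℕ)) + ((lS k : ℕ) - (lT k : ℕ))) := by
      refine Finset.sum_congr rfl fun k hk => ?_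
      rw [Function.update_of_ne (Finset.mem_erase.1 hk).1]
    rw [he, Function.update_self, hcval]
    omega

lemma bbox_self {lS hS lT hT : Fin d → Fin n} (h0 : defSum lS hS lT hT = 0) :
    Box (fun k => min (lS k) (lT k)) (fun k => max (hS k) (hT k)) = Box lS hS := by
  unfold defSum at h0
  have hterm : ∀ k, ((hT k : ℕ) - (hS k : ℕ)) + ((lS k : ℕ) - (lT k : ℕ)) = 0 :=
    fun k => Finset.sum_eq_zero_iff.1 h0 k (Finset.mem_univ k)
  have hmin : (fun k => min (lS k) (lT k)) = lS := by
    funext k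
    refine Fin.val_injective ?_
    rw [val_min]
    have := hterm k
    omega
  have hmax : (fun k => max (hS k) (hT k)) = hS := by
    funext k
    refine Fin.val_injective ?_
    rw [val_max]
    have := hterm k
    omega
  rw [hmin, hmax]

lemma grow {C : Set (Fin d → Fin n)} (hC : Closed n d C) :
    ∀ (N : ℕ) (lS hS lT hT : Fin d → Fin n),
      (∀ k, (lS k : ℕ) ≤ hS k) → (∀ k, (lT k : ℕ) ≤ hT k) →
      gapSum lS hS lT hT ≤ 2 → Box lS hS ⊆ C → Box lT hT ⊆ C →
      defSum lS hS lT hT ≤ N →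
      Box (fun k => min (lS k) (lT k)) (fun k => max (hS k) (hT k)) ⊆ C := by
  intro N
  induction N with
  | zero =>
    intro lS hS lT hT hSb hTb hgap hSC hTC hdef
    rw [bbox_self (Nat.le_zero.1 hdef)]
    exact hSC
  | succ N ih =>
    intro lS hS lT hT hSb hTb hgap hSC hTC hdef
    by_cases h0 : defSum lS hS lT hT = 0
    · rw [bbox_self h0]
      exact hSC
    · by_cases hg : gapSum lS hS lT hT = 0
      · obtain ⟨i, hi⟩ : ∃ i, (hS i : ℕ) < hT i ∨ (lT i : ℕ) < lS i := by
          by_contra hcon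
          push_neg at hcon
          refine h0 ?_
          unfold defSum
          refine Finset.sum_eq_zero fun k _ => ?_
          have := hcon k
          omega
        rcases hi with hiu | hid
        · obtain ⟨hS', h1, h2, h3, h4, h5⟩ :=
            grow_step_up hC hSb hTb hgap hSC hTC i hiu (Or.inr hg)
          have hmaxeq : (fun k => max (hS' k) (hT k)) = (fun k => max (hS k) (hT k)) :=
            funext h4
          rw [← hmaxeq]
          exact ih lS hS' lT hT h1 hTb h3 h2 hTC (by omega)
        · obtain ⟨lS', h1, h2, h3, h4, h5⟩ :=
            grow_step_down hC hSb hTb hgap hSC hTC i hid (Or.inr hg)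
          have hmineq : (fun k => min (lS' k) (lT k)) = (fun k => min (lS k) (lT k)) :=
            funext h4
          rw [← hmineq]
          exact ih lS' hS lT hT h1 hTb h3 h2 hTC (by omega)
      · obtain ⟨j, hj⟩ : ∃ j, (hS j : ℕ) < lT j ∨ (hT j : ℕ) < lS j := by
          by_contra hcon
          push_neg at hcon
          refine hg ?_
          unfold gapSum
          refine Finset.sum_eq_zero fun k _ => ?_
          have := hcon k
          omega
        rcases hj with hju | hjd
        · have hup : (hS j : ℕ) < hT j := lt_of_lt_of_le hju (hTb j)
          obtain ⟨hS', h1, h2, h3, h4, h5⟩ :=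
            grow_step_up hC hSb hTb hgap hSC hTC j hup (Or.inl hju)
          have hmaxeq : (fun k => max (hS' k) (hT k)) = (fun k => max (hS k) (hT k)) :=
            funext h4
          rw [← hmaxeq]
          exact ih lS hS' lT hT h1 hTb h3 h2 hTC (by omega)
        · have hdown : (lT j : ℕ) < lS j := lt_of_le_of_lt (hTb j) hjd
          obtain ⟨lS', h1, h2, h3, h4, h5⟩ :=
            grow_step_down hC hSb hTb hgap hSC hTC j hdown (Or.inl hjd)
          have hmineq : (fun k => min (lS' k) (lT k)) = (fun k => min (lS k) (lT k)) :=
            funext h4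
          rw [← hmineq]
          exact ih lS' hS lT hT h1 hTb h3 h2 hTC (by omega)

/-- The closure of the union of two boxes at combined gap at most 2 is their
bounding box. -/
lemma cl_box_union {lS hS lT hT : Fin d → Fin n}
    (hSb : ∀ k, (lS k : ℕ) ≤ hS k) (hTb : ∀ k, (lT k : ℕ) ≤ hT k)
    (hgap : gapSum lS hS lT hT ≤ 2) :
    cl n d (Box lS hS ∪ Box lT hT)
      = Box (fun k => min (lS k) (lT k)) (fun k => max (hS k) (hT k)) := by
  apply subset_antisymm
  · refine cl_subset_of_closed ?_ (closed_box _ _)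
    refine Set.union_subset ?_ ?_
    · intro x hx
      rw [mem_box] at hx ⊢
      intro k
      have := hx k
      rw [val_min, val_max]
      omega
    · intro x hx
      rw [mem_box] at hx ⊢
      intro k
      have := hx k
      rw [val_min, val_max]
      omega
  · refine grow (closed_cl _) (defSum lS hS lT hT) lS hS lT hT hSb hTb hgap ?_ ?_ le_rfl
    · exact le_trans Set.subset_union_left (subset_bootClosure _ _ _)
    · exact le_trans Set.subset_union_right (subset_bootClosure _ _ _)

/-! ### Misc helpers -/

lemma gridAdj_symm {x y : Fin d → Fin n} (h : gridAdj n d x y) : gridAdj n d y x := by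
  obtain ⟨i, h1, h2⟩ := h
  exact ⟨i, h1.symm, fun j hj => (h2 j hj).symm⟩

lemma isCube_box_iff {S : Set (Fin d → Fin n)} :
    IsCube S ↔ ∃ lo hi : Fin d → Fin n, (∀ i, (lo i : ℕ) ≤ hi i) ∧ S = Box lo hi := by
  constructor
  · rintro ⟨lo, hi, hb, he⟩
    exact ⟨lo, hi, fun i => Fin.le_def.1 (hb i), he⟩
  · rintro ⟨lo, hi, hb, he⟩
    exact ⟨lo, hi, fun i => Fin.le_def.2 (hb i), he⟩

lemma closed_singleton (a : Fin d → Fin n) : Closed n d {a} := by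
  intro v hv
  exfalso
  have hsub : {u | gridAdj n d v u ∧ u ∈ ({a} : Set (Fin d → Fin n))} ⊆ {a} :=
    fun u hu => hu.2
  have := Set.ncard_le_ncard hsub (Set.toFinite _)
  rw [Set.ncard_singleton] at this
  omega

lemma cl_singleton (a : Fin d → Fin n) : cl n d {a} = {a} :=
  cl_eq_of_closed (closed_singleton a)

lemma isCube_singleton (a : Fin d → Fin n) : IsCube ({a} : Set (Fin d → Fin n)) := by
  refine ⟨a, a, fun i => le_refl _, ?_⟩
  ext x
  constructor
  · rintro rfl
    exact fun i => ⟨le_refl _, le_refl _⟩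
  · intro hx
    have : x = a := funext fun i => le_antisymm (hx i).2 (hx i).1
    exact this

lemma closed_empty : Closed n d (∅ : Set (Fin d → Fin n)) := by
  intro v hv
  exfalso
  have hsub : {u | gridAdj n d v u ∧ u ∈ (∅ : Set (Fin d → Fin n))} ⊆ ∅ := fun u hu => hu.2
  have := Set.ncard_le_ncard hsub (Set.toFinite _)
  rw [Set.ncard_empty] at this
  omega

lemma cl_empty : cl n d (∅ : Set (Fin d → Fin n)) = ∅ :=
  cl_eq_of_closed closed_empty

/-- Any partition cut inside a box has a crossing edge. -/
lemma box_cross {lo hi : Fin d → Fin n} (S : Set (Fin d → Fin n)) :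
    ∀ (N : ℕ) (x y : Fin d → Fin n), ndist x y ≤ N → x ∈ Box lo hi → y ∈ Box lo hi →
      x ∈ S → y ∉ S →
      ∃ a b, a ∈ S ∧ a ∈ Box lo hi ∧ b ∈ Box lo hi ∧ b ∉ S ∧ gridAdj n d a b := by
  intro N
  induction N with
  | zero =>
    intro x y h0 _ _ hxS hyS
    rw [Nat.le_zero] at h0
    exact absurd (ndist_eq_zero h0 ▸ hxS) hyS
  | succ N ih =>
    intro x y hN hx hy hxS hyS
    have hxy : x ≠ y := fun h => hyS (h ▸ hxS)
    obtain ⟨j, hj⟩ : ∃ j, (x j : ℕ) ≠ (y j : ℕ) := by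
      by_contra hcon
      push_neg at hcon
      exact hxy (funext fun k => Fin.val_injective (hcon k))
    have hm : ∃ m : Fin n, ((x j : ℕ) + 1 = m ∨ (m : ℕ) + 1 = x j) ∧
        (((m : ℕ) - y j) + ((y j : ℕ) - m)) + 1
          = ((x j : ℕ) - y j) + ((y j : ℕ) - x j) ∧
        (((x j : ℕ) ≤ m ∧ (m : ℕ) ≤ y j) ∨ ((y j : ℕ) ≤ m ∧ (m : ℕ) ≤ x j)) := by
      rcases lt_or_gt_of_ne hj with h | h
      · have hb1 : (x j : ℕ) + 1 < n := by have := (y j).isLt; omega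
        refine ⟨⟨(x j : ℕ) + 1, hb1⟩, Or.inl rfl, ?_, ?_⟩ <;>
          · simp only [Fin.val_mk]; omega
      · have hb2 : (x j : ℕ) - 1 < n := by have := (x j).isLt; omega
        refine ⟨⟨(x j : ℕ) - 1, hb2⟩, Or.inr ?_, ?_, ?_⟩ <;>
          · simp only [Fin.val_mk]; omega
    obtain ⟨m, hm1, hm2, hm3⟩ := hm
    set x' := Function.update x j m with hx'def
    have hadj : gridAdj n d x x' := adj_update x j m hm1
    have hx'B : x' ∈ Box lo hi := by
      refine mem_box.2 fun k => ?_
      by_cases hk : k = j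
      · subst hk
        rw [hx'def, Function.update_self]
        have b1 := mem_box.1 hx k
        have b2 := mem_box.1 hy k
        omega
      · rw [hx'def, Function.update_of_ne hk]
        exact mem_box.1 hx k
    have hnd : ndist x' y ≤ N := by
      have e1 : ndist x y = ((x j : ℕ) - y j + ((y j : ℕ) - x j)) +
          ∑ k ∈ Finset.univ.erase j, (((x k : ℕ) - y k) + ((y k : ℕ) - x k)) :=
        sum_split _ j
      have e2 : ndist x' y = ((x' j : ℕ) - y j + ((y j : ℕ) - x' j)) +
          ∑ k ∈ Finset.univ.erase j, (((x' k : ℕ) - y k) + ((y k : ℕ) - x' k)) :=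
        sum_split _ j
      have e3 : ∑ k ∈ Finset.univ.erase j, (((x' k : ℕ) - y k) + ((y k : ℕ) - x' k))
          = ∑ k ∈ Finset.univ.erase j, (((x k : ℕ) - y k) + ((y k : ℕ) - x k)) := by
        refine Finset.sum_congr rfl fun k hk => ?_
        rw [hx'def, Function.update_of_ne (Finset.mem_erase.1 hk).1]
      have e4 : x' j = m := by rw [hx'def, Function.update_self]
      rw [e4] at e2
      omega
    by_cases hx'S : x' ∈ S
    · exact ih x' y hnd hx'B hy hx'S hyS
    · exact ⟨x, x', hxS, hx, hx'B, hx'S, hadj⟩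

/-! ### The merging process -/

lemma proc {A Q K : Set (Fin d → Fin n)} (hQcube : IsCube Q)
    (hKQ : K ⊆ A ∩ Q) (hK : cl n d K = Q)
    (hmin : ∀ K', K' ⊆ K → cl n d K' = Q → K' = K) :
    ∀ (N : ℕ) (𝒞 : Finset (Set (Fin d → Fin n))),
      𝒞.card ≤ N → 2 ≤ 𝒞.card →
      (∀ P ∈ 𝒞, P.Nonempty) →
      (∀ P ∈ 𝒞, ∀ P' ∈ 𝒞, P ≠ P' → Disjoint P P') →
      (∀ P ∈ 𝒞, IsCube (cl n d P)) →
      (⋃ P ∈ 𝒞, (P : Set (Fin d → Fin n))) = K →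
      ∃ S T A₁ A₂ : Set (Fin d → Fin n),
        IsCube S ∧ IsCube T ∧ S ⊆ Q ∧ T ⊆ Q ∧ S ≠ Q ∧ T ≠ Q ∧
        A₁ ⊆ A ∩ Q ∧ A₂ ⊆ A ∩ Q ∧ Disjoint A₁ A₂ ∧
        cl n d A₁ = S ∧ cl n d A₂ = T ∧ cl n d (S ∪ T) = Q := by
  classical
  intro N
  induction N with
  | zero =>
    intro 𝒞 hcard h2 _ _ _ _
    omega
  | succ N ih =>
    intro 𝒞 hcard h2 hne hdisj hcube hunion
    have hsubK : ∀ P ∈ 𝒞, P ⊆ K := by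
      intro P hP x hx
      rw [← hunion]
      exact Set.mem_iUnion₂.2 ⟨P, hP, hx⟩
    by_cases hc2 : 𝒞.card = 2
    · -- base case: two parts
      obtain ⟨X, Y, hXY, rfl⟩ := Finset.card_eq_two.1 hc2
      have hXmem : X ∈ ({X, Y} : Finset (Set (Fin d → Fin n))) := Finset.mem_insert_self _ _
      have hYmem : Y ∈ ({X, Y} : Finset (Set (Fin d → Fin n))) :=
        Finset.mem_insert_of_mem (Finset.mem_singleton_self _)
      have hXK : X ⊆ K := hsubK X hXmem
      have hYK : Y ⊆ K := hsubK Y hYmem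
      have hUXY : X ∪ Y = K := by
        rw [← hunion]
        ext x
        simp [Set.mem_iUnion₂]
      have hclXQ : cl n d X ⊆ Q := by
        rw [← hK]; exact bootClosure_mono _ _ hXK
      have hclYQ : cl n d Y ⊆ Q := by
        rw [← hK]; exact bootClosure_mono _ _ hYK
      have hdXY : Disjoint X Y := hdisj X hXmem Y hYmem hXY
      have hXne : X.Nonempty := hne X hXmem
      have hYne : Y.Nonempty := hne Y hYmem
      refine ⟨cl n d X, cl n d Y, X, Y, hcube X hXmem, hcube Y hYmem, hclXQ, hclYQ,
        ?_, ?_, hXK.trans hKQ, hYK.trans hKQ, hdXY, rfl, rfl, ?_⟩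
      · intro hclX
        have hXeqK : X = K := hmin X hXK hclX
        obtain ⟨y, hy⟩ := hYne
        exact Set.disjoint_left.1 hdXY (hXeqK ▸ hYK hy) hy
      · intro hclY
        have hYeqK : Y = K := hmin Y hYK hclY
        obtain ⟨x, hx⟩ := hXne
        exact Set.disjoint_right.1 hdXY (hYeqK ▸ hXK hx) hx
      · rw [cl_cl_union, hUXY, hK]
    · have h3 : 3 ≤ 𝒞.card := by omega
      by_cases hclose : ∃ P ∈ 𝒞, ∃ P' ∈ 𝒞, P ≠ P' ∧
          ∃ lS hS lT hT : Fin d → Fin n, (∀ k, (lS k : ℕ) ≤ hS k) ∧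
            (∀ k, (lT k : ℕ) ≤ hT k) ∧ cl n d P = Box lS hS ∧ cl n d P' = Box lT hT ∧
            gapSum lS hS lT hT ≤ 2
      · -- merge two close parts
        obtain ⟨P, hP, P', hP', hPP', lS, hS_, lT, hT_, hSb, hTb, hclP, hclP', hgap⟩ := hclose
        have hclU : cl n d (P ∪ P')
            = Box (fun k => min (lS k) (lT k)) (fun k => max (hS_ k) (hT_ k)) := by
          rw [← cl_cl_union, hclP, hclP', cl_box_union hSb hTb hgap]
        have hcubeU : IsCube (cl n d (P ∪ P')) := by
          refine isCube_box_iff.2 ⟨_, _, fun i => ?_, hclU⟩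
          rw [val_min, val_max]
          have := hSb i; have := hTb i
          omega
        set 𝒞' := insert (P ∪ P') ((𝒞.erase P).erase P') with h𝒞'
        have hP'e : P' ∈ 𝒞.erase P := Finset.mem_erase.2 ⟨fun e => hPP' e.symm, hP'⟩
        have hnotmem : (P ∪ P') ∉ (𝒞.erase P).erase P' := by
          intro hmem
          have hRP : P ∪ P' ≠ P := (Finset.mem_erase.1 (Finset.mem_of_mem_erase hmem)).1
          have hR𝒞 : P ∪ P' ∈ 𝒞 := Finset.mem_of_mem_erase (Finset.mem_of_mem_erase hmem)
          have hd := hdisj P hP (P ∪ P') hR𝒞 (fun e => hRP e.symm)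
          obtain ⟨x, hx⟩ := hne P hP
          exact Set.disjoint_left.1 hd hx (Or.inl hx)
        have hcarde : ((𝒞.erase P).erase P').card = 𝒞.card - 2 := by
          rw [Finset.card_erase_of_mem hP'e, Finset.card_erase_of_mem hP]
          omega
        have hcard' : 𝒞'.card = 𝒞.card - 1 := by
          rw [h𝒞', Finset.card_insert_of_notMem hnotmem, hcarde]
          omega
        have hold : ∀ R ∈ (𝒞.erase P).erase P', R ∈ 𝒞 ∧ R ≠ P ∧ R ≠ P' := by
          intro R hR
          exact ⟨Finset.mem_of_mem_erase (Finset.mem_of_mem_erase hR),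
            (Finset.mem_erase.1 (Finset.mem_of_mem_erase hR)).1,
            (Finset.mem_erase.1 hR).1⟩
        refine ih 𝒞' (by omega) (by omega) ?_ ?_ ?_ ?_
        · intro R hR
          rcases Finset.mem_insert.1 hR with rfl | hR
          · obtain ⟨x, hx⟩ := hne P hP
            exact ⟨x, Or.inl hx⟩
          · exact hne R (hold R hR).1
        · intro R hR R' hR' hRR'
          rcases Finset.mem_insert.1 hR with rfl | hR <;>
            rcases Finset.mem_insert.1 hR' with rfl | hR'
          · exact absurd rfl hRR'
          · obtain ⟨hR'1, hR'2, hR'3⟩ := hold R' hR'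
            exact Set.disjoint_union_left.2
              ⟨hdisj P hP R' hR'1 (fun e => hR'2 e.symm),
               hdisj P' hP' R' hR'1 (fun e => hR'3 e.symm)⟩
          · obtain ⟨hR1, hR2, hR3⟩ := hold R hR
            exact (Set.disjoint_union_left.2
              ⟨hdisj P hP R hR1 (fun e => hR2 e.symm),
               hdisj P' hP' R hR1 (fun e => hR3 e.symm)⟩).symm
          · exact hdisj R (hold R hR).1 R' (hold R' hR').1 hRR'
        · intro R hR
          rcases Finset.mem_insert.1 hR with rfl | hR
          · exact hcubeU
          · exact hcube R (hold R hR).1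
        · rw [← hunion]
          apply subset_antisymm
          · refine Set.iUnion₂_subset fun R hR => ?_
            rcases Finset.mem_insert.1 hR with rfl | hR
            · exact Set.union_subset
                (Set.subset_iUnion₂_of_subset P hP (le_refl _))
                (Set.subset_iUnion₂_of_subset P' hP' (le_refl _))
            · exact Set.subset_iUnion₂_of_subset R (hold R hR).1 (le_refl _)
          · refine Set.iUnion₂_subset fun R hR => ?_
            by_cases hRP : R = P
            · subst hRP
              exact Set.subset_iUnion₂_of_subset (R ∪ P')
                (Finset.mem_insert_self _ _) Set.subset_union_left
            · by_cases hRP' : R = P'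
              · subst hRP'
                exact Set.subset_iUnion₂_of_subset (P ∪ R)
                  (Finset.mem_insert_self _ _) Set.subset_union_right
              · exact Set.subset_iUnion₂_of_subset R
                  (Finset.mem_insert_of_mem
                    (Finset.mem_erase.2 ⟨hRP', Finset.mem_erase.2 ⟨hRP, hR⟩⟩)) (le_refl _)
      · -- all parts are far apart: contradiction
        exfalso
        have hnotclose : ∀ P ∈ 𝒞, ∀ P' ∈ 𝒞, P ≠ P' →
            ∀ u w, u ∈ cl n d P → w ∈ cl n d P' → ¬ (ndist u w ≤ 2) := by
          intro P hP P' hP' hPP' u w hu hw hnd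
          obtain ⟨lS, hS_, hSb, hSeq⟩ := isCube_box_iff.1 (hcube P hP)
          obtain ⟨lT, hT_, hTb, hTeq⟩ := isCube_box_iff.1 (hcube P' hP')
          refine hclose ⟨P, hP, P', hP', hPP', lS, hS_, lT, hT_, hSb, hTb, hSeq, hTeq, ?_⟩
          rw [hSeq] at hu
          rw [hTeq] at hw
          exact le_trans (gapSum_le_ndist hu hw) hnd
        have hUQ : (⋃ P ∈ 𝒞, cl n d P) = Q := by
          apply subset_antisymm
          · refine Set.iUnion₂_subset fun P hP => ?_
            rw [← hK]
            exact bootClosure_mono _ _ (hsubK P hP)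
          · rw [← hK]
            refine cl_subset_of_closed ?_ ?_
            · intro x hx
              rw [← hunion] at hx
              obtain ⟨P, hP, hxP⟩ := Set.mem_iUnion₂.1 hx
              exact Set.mem_iUnion₂.2 ⟨P, hP, subset_bootClosure _ _ _ hxP⟩
            · -- the union of far-apart boxes is closed
              intro v hv
              by_contra hvU
              obtain ⟨u, w, hu, hw, huw⟩ :=
                (Set.one_lt_ncard_iff (Set.toFinite _)).1 hv
              obtain ⟨P, hP, huP⟩ := Set.mem_iUnion₂.1 hu.2
              obtain ⟨P', hP', hwP⟩ := Set.mem_iUnion₂.1 hw.2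
              by_cases hPP : cl n d P = cl n d P'
              · obtain ⟨lS, hS_, hSb, hSeq⟩ := isCube_box_iff.1 (hcube P hP)
                have hvout : v ∉ Box lS hS_ := by
                  rw [← hSeq]
                  intro hvP
                  exact hvU (Set.mem_iUnion₂.2 ⟨P, hP, hvP⟩)
                refine huw (box_nbr_unique hvout ?_ ?_ hu.1 hw.1)
                · rw [← hSeq]; exact huP
                · rw [← hSeq, hPP]; exact hwP
              · have hPne : P ≠ P' := fun e => hPP (by rw [e])
                refine hnotclose P hP P' hP' hPne u w huP hwP ?_
                calc ndist u w ≤ ndist u v + ndist v w := ndist_triangle u v w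
                _ ≤ 2 := by
                    have h1 := ndist_le_one_of_adj (gridAdj_symm hu.1)
                    have h2 := ndist_le_one_of_adj hw.1
                    omega
        -- pick two distinct parts and find a crossing edge in Q
        obtain ⟨P₀, hP₀, P₁, hP₁, hP01⟩ := Finset.one_lt_card.1 (by omega : 1 < 𝒞.card)
        obtain ⟨p, hp⟩ := hne P₀ hP₀
        obtain ⟨q, hq⟩ := hne P₁ hP₁
        have hpcl : p ∈ cl n d P₀ := subset_bootClosure _ _ _ hp
        have hqcl : q ∈ cl n d P₁ := subset_bootClosure _ _ _ hq
        have hqnot : q ∉ cl n d P₀ := by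
          intro hq0
          exact hnotclose P₀ hP₀ P₁ hP₁ hP01 q q hq0 hqcl (by rw [ndist]; simp)
        obtain ⟨loQ, hiQ, hQb, hQeq⟩ := isCube_box_iff.1 hQcube
        have hpQ : p ∈ Box loQ hiQ := by
          rw [← hQeq, ← hUQ]
          exact Set.mem_iUnion₂.2 ⟨P₀, hP₀, hpcl⟩
        have hqQ : q ∈ Box loQ hiQ := by
          rw [← hQeq, ← hUQ]
          exact Set.mem_iUnion₂.2 ⟨P₁, hP₁, hqcl⟩
        obtain ⟨a, b, haS, haB, hbB, hbS, hab⟩ :=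
          box_cross (cl n d P₀) (ndist p q) p q le_rfl hpQ hqQ hpcl hqnot
        have hbU : b ∈ ⋃ P ∈ 𝒞, cl n d P := by
          rw [hUQ, hQeq]; exact hbB
        obtain ⟨P', hP', hbP'⟩ := Set.mem_iUnion₂.1 hbU
        have hP0P' : P₀ ≠ P' := by
          intro e
          exact hbS (e ▸ hbP')
        exact hnotclose P₀ hP₀ P' hP' hP0P' a b haS hbP'
          (le_trans (ndist_le_one_of_adj hab) (by omega))

end BPaux

/-- If a cube `Q` of dimension at least 1 is internally spanned,
then it is spanned by two disjointly internally spanned proper subcubes. -/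
theorem span_from_two_subcubes {n d : ℕ} (Q : Set (Fin d → Fin n)) (hQ : IsCube Q)
    (hdim : 1 ≤ cubeDim Q) (A : Set (Fin d → Fin n)) (hspan : IntSpans n d A Q) :
    ∃ S T A₁ A₂ : Set (Fin d → Fin n),
      IsCube S ∧ IsCube T ∧ S ⊆ Q ∧ T ⊆ Q ∧ S ≠ Q ∧ T ≠ Q ∧
      A₁ ⊆ A ∩ Q ∧ A₂ ⊆ A ∩ Q ∧ Disjoint A₁ A₂ ∧
      bootClosure (gridAdj n d) 2 A₁ = S ∧ bootClosure (gridAdj n d) 2 A₂ = T ∧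
      bootClosure (gridAdj n d) 2 (S ∪ T) = Q := by
  classical
  have hAQ : BPaux.cl n d (A ∩ Q) = Q := hspan
  set 𝒮 : Set (Set (Fin d → Fin n)) := {K | K ⊆ A ∩ Q ∧ BPaux.cl n d K = Q} with h𝒮
  have hmem : A ∩ Q ∈ 𝒮 := ⟨le_rfl, hAQ⟩
  have hcne : (Set.ncard '' 𝒮).Nonempty := ⟨(A ∩ Q).ncard, ⟨A ∩ Q, hmem, rfl⟩⟩
  obtain ⟨K, hK𝒮, hKc⟩ := Nat.sInf_mem hcne
  have hKQsub : K ⊆ A ∩ Q := hK𝒮.1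
  have hKcl : BPaux.cl n d K = Q := hK𝒮.2
  have hmin : ∀ K', K' ⊆ K → BPaux.cl n d K' = Q → K' = K := by
    intro K' h1 h2
    have hK'𝒮 : K' ∈ 𝒮 := ⟨h1.trans hKQsub, h2⟩
    have hle : sInf (Set.ncard '' 𝒮) ≤ K'.ncard := Nat.sInf_le ⟨K', hK'𝒮, rfl⟩
    exact Set.eq_of_subset_of_ncard_le h1 (by omega) (Set.toFinite K)
  obtain ⟨lo, hi, hbQ, hQeq⟩ := hQ
  have hQne : Q.Nonempty := ⟨lo, by rw [hQeq]; exact fun i => ⟨le_refl _, hbQ i⟩⟩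
  have hKne : K.Nonempty := by
    rcases Set.eq_empty_or_nonempty K with rfl | h
    · rw [BPaux.cl_empty] at hKcl
      exact absurd hKcl (by obtain ⟨x, hx⟩ := hQne; intro e; rw [← e] at hx; exact hx)
    · exact h
  obtain ⟨a, ha⟩ := hKne
  have htwo : ∃ b ∈ K, b ≠ a := by
    by_contra hcon
    push_neg at hcon
    have hKa : K = {a} := subset_antisymm (fun x hx => hcon x hx) (by
      intro x hx
      rw [hx]
      exact ha)
    rw [hKa, BPaux.cl_singleton] at hKcl
    have hdim0 : cubeDim Q = 0 := by
      rw [← hKcl]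
      unfold cubeDim
      refine Finset.sum_eq_zero fun i _ => ?_
      rw [Set.image_singleton, Set.ncard_singleton]
      rfl
    omega
  obtain ⟨b, hbK, hba⟩ := htwo
  set 𝒞₀ : Finset (Set (Fin d → Fin n)) :=
    (Set.toFinite K).toFinset.image (fun x => ({x} : Set (Fin d → Fin n))) with h𝒞₀
  have hmem₀ : ∀ x ∈ K, ({x} : Set (Fin d → Fin n)) ∈ 𝒞₀ := by
    intro x hx
    rw [h𝒞₀]
    exact Finset.mem_image.2 ⟨x, (Set.Finite.mem_toFinset _).2 hx, rfl⟩
  have hmem₀' : ∀ P ∈ 𝒞₀, ∃ x ∈ K, P = {x} := by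
    intro P hP
    rw [h𝒞₀] at hP
    obtain ⟨x, hx, rfl⟩ := Finset.mem_image.1 hP
    exact ⟨x, (Set.Finite.mem_toFinset _).1 hx, rfl⟩
  have hcard₀ : 2 ≤ 𝒞₀.card := by
    refine Finset.one_lt_card.2 ⟨{a}, hmem₀ a ha, {b}, hmem₀ b hbK, ?_⟩
    intro e
    have hab : a = b := Set.singleton_eq_singleton_iff.1 e
    exact hba hab.symm
  have hQcube' : IsCube Q := ⟨lo, hi, hbQ, hQeq⟩
  refine BPaux.proc hQcube' hKQsub hKcl hmin 𝒞₀.card 𝒞₀ le_rfl hcard₀ ?_ ?_ ?_ ?_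
  · intro P hP
    obtain ⟨x, _, rfl⟩ := hmem₀' P hP
    exact ⟨x, rfl⟩
  · intro P hP P' hP' hPP'
    obtain ⟨x, _, rfl⟩ := hmem₀' P hP
    obtain ⟨y, _, rfl⟩ := hmem₀' P' hP'
    refine Set.disjoint_singleton.2 ?_
    intro e
    exact hPP' (by rw [e])
  · intro P hP
    obtain ⟨x, _, rfl⟩ := hmem₀' P hP
    rw [BPaux.cl_singleton]
    exact BPaux.isCube_singleton x
  · ext x
    constructor
    · intro hx
      obtain ⟨P, hP, hxP⟩ := Set.mem_iUnion₂.1 hx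
      obtain ⟨y, hy, rfl⟩ := hmem₀' P hP
      rw [hxP]
      exact hy
    · intro hx
      exact Set.mem_iUnion₂.2 ⟨{x}, hmem₀ x hx, rfl⟩
end

section
/- Let Q be a subcube of [n]^d. If A ⊆ [n]^d internally spans Q, then |A ∩ Q| ≥ dim(Q)/2 + 1. In particular, if A internally spans a copy of [2]^{2ℓ} then |A ∩ Q| ≥ ℓ + 1, and if A internally spans a copy of [2]^{2ℓ+1} then |A ∩ Q| ≥ ℓ + 2. -/
/-! ### Auxiliary development for `min_spanning_size` -/

section MinSpanAux

open scoped Classical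

variable {n d : ℕ}

/-- Supremum of coordinate `i` over `S`. -/
noncomputable def csupC (S : Set (Fin d → Fin n)) (i : Fin d) : ℕ :=
  sSup ((fun x => (x i : ℕ)) '' S)

/-- Infimum of coordinate `i` over `S`. -/
noncomputable def cinfC (S : Set (Fin d → Fin n)) (i : Fin d) : ℕ :=
  sInf ((fun x => (x i : ℕ)) '' S)

/-- Dimension of the bounding box of `S`. -/
noncomputable def bdim (S : Set (Fin d → Fin n)) : ℕ :=
  ∑ i : Fin d, (csupC S i - cinfC S i)

lemma le_csupC {S : Set (Fin d → Fin n)} {x : Fin d → Fin n} (hx : x ∈ S) (i : Fin d) :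
    (x i : ℕ) ≤ csupC S i :=
  le_csSup (Set.toFinite _).bddAbove ⟨x, hx, rfl⟩

lemma cinfC_le {S : Set (Fin d → Fin n)} {x : Fin d → Fin n} (hx : x ∈ S) (i : Fin d) :
    cinfC S i ≤ (x i : ℕ) :=
  Nat.sInf_le ⟨x, hx, rfl⟩

lemma csupC_attained {S : Set (Fin d → Fin n)} (hS : S.Nonempty) (i : Fin d) :
    ∃ x ∈ S, (x i : ℕ) = csupC S i := by
  obtain ⟨x, hx, h⟩ := Nat.sSup_mem (hS.image fun x => (x i : ℕ)) (Set.toFinite _).bddAbove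
  exact ⟨x, hx, h⟩

lemma cinfC_attained {S : Set (Fin d → Fin n)} (hS : S.Nonempty) (i : Fin d) :
    ∃ x ∈ S, (x i : ℕ) = cinfC S i := by
  obtain ⟨x, hx, h⟩ := Nat.sInf_mem (hS.image fun x => (x i : ℕ))
  exact ⟨x, hx, h⟩

/-- `ℓ¹` distance between two vertices. -/
def l1 (x y : Fin d → Fin n) : ℕ :=
  ∑ i : Fin d, ((x i : ℕ) - (y i : ℕ) + ((y i : ℕ) - (x i : ℕ)))

lemma l1_eq_zero {x y : Fin d → Fin n} (h : l1 x y = 0) : x = y := by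
  funext i
  have := (Finset.sum_eq_zero_iff).1 h i (Finset.mem_univ i)
  exact Fin.ext (by omega)

lemma l1_self (x : Fin d → Fin n) : l1 x x = 0 :=
  Finset.sum_eq_zero fun j _ => by omega

lemma gridAdj_l1 {v u : Fin d → Fin n} (h : gridAdj n d v u) : l1 v u = 1 := by
  obtain ⟨i, h1, h2⟩ := h
  rw [l1, Finset.sum_eq_single_of_mem i (Finset.mem_univ i)
    (fun j _ hj => by rw [h2 j hj]; omega)]
  omega

lemma bdim_singleton (v : Fin d → Fin n) : bdim {v} = 0 := by
  apply Finset.sum_eq_zero; intro i _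
  obtain ⟨x, hx, hxe⟩ := csupC_attained (Set.singleton_nonempty v) i
  obtain ⟨y, hy, hye⟩ := cinfC_attained (Set.singleton_nonempty v) i
  rw [Set.mem_singleton_iff] at hx hy
  subst hx; subst hy
  omega

/-- Merging two sets joined by a pair of points costs at most their `ℓ¹` distance. -/
lemma bdim_union_le {S1 S2 : Set (Fin d → Fin n)} {u w : Fin d → Fin n}
    (hu : u ∈ S1) (hw : w ∈ S2) :
    bdim (S1 ∪ S2) ≤ bdim S1 + bdim S2 + l1 u w := by
  rw [bdim, bdim, bdim, l1, ← Finset.sum_add_distrib, ← Finset.sum_add_distrib]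
  apply Finset.sum_le_sum
  intro i _
  have hne : (S1 ∪ S2).Nonempty := ⟨u, Or.inl hu⟩
  obtain ⟨xs, hxs, hxse⟩ := csupC_attained hne i
  obtain ⟨xi, hxi, hxie⟩ := cinfC_attained hne i
  have h1 : (xs i : ℕ) ≤ csupC S1 i ∨ (xs i : ℕ) ≤ csupC S2 i :=
    hxs.elim (fun h => Or.inl (le_csupC h i)) (fun h => Or.inr (le_csupC h i))
  have h2 : cinfC S1 i ≤ (xi i : ℕ) ∨ cinfC S2 i ≤ (xi i : ℕ) :=
    hxi.elim (fun h => Or.inl (cinfC_le h i)) (fun h => Or.inr (cinfC_le h i))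
  have hu1 := le_csupC hu i; have hu2 := cinfC_le hu i
  have hw1 := le_csupC hw i; have hw2 := cinfC_le hw i
  omega

lemma bdim_insert_le_of_between {S : Set (Fin d → Fin n)} {v : Fin d → Fin n}
    (hb : ∀ i, cinfC S i ≤ (v i : ℕ) ∧ (v i : ℕ) ≤ csupC S i) :
    bdim (insert v S) ≤ bdim S := by
  apply Finset.sum_le_sum
  intro i _
  have hne : (insert v S).Nonempty := ⟨v, Set.mem_insert _ _⟩
  obtain ⟨xs, hxs, hxse⟩ := csupC_attained hne i
  obtain ⟨xi, hxi, hxie⟩ := cinfC_attained hne i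
  have h1 : (xs i : ℕ) ≤ csupC S i := by
    rcases hxs with rfl | h
    · exact (hb i).2
    · exact le_csupC h i
  have h2 : cinfC S i ≤ (xi i : ℕ) := by
    rcases hxi with rfl | h
    · exact (hb i).1
    · exact cinfC_le h i
  omega

/-- Adding a vertex with two distinct neighbours in `S` does not increase `bdim`. -/
lemma bdim_insert_le {S : Set (Fin d → Fin n)} {v u w : Fin d → Fin n}
    (hu : u ∈ S) (hw : w ∈ S) (huw : u ≠ w)
    (hau : gridAdj n d v u) (haw : gridAdj n d v w) :
    bdim (insert v S) ≤ bdim S := by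
  apply bdim_insert_le_of_between
  obtain ⟨a, ha1, ha2⟩ := hau
  obtain ⟨b, hb1, hb2⟩ := haw
  intro i
  have hu1 := le_csupC hu i; have hu2 := cinfC_le hu i
  have hw1 := le_csupC hw i; have hw2 := cinfC_le hw i
  by_cases hia : i = a
  · by_cases hib : i = b
    · have ha1' : (v i : ℕ) + 1 = (u i : ℕ) ∨ (u i : ℕ) + 1 = (v i : ℕ) := by
        rw [hia]; exact ha1
      have hb1' : (v i : ℕ) + 1 = (w i : ℕ) ∨ (w i : ℕ) + 1 = (v i : ℕ) := by
        rw [hib]; exact hb1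
      have hne : (u i : ℕ) ≠ (w i : ℕ) := by
        intro hct
        apply huw
        funext j
        by_cases hj : j = i
        · subst hj; exact Fin.ext hct
        · rw [← ha2 j (hia ▸ hj), hb2 j (hib ▸ hj)]
      omega
    · rw [hb2 i hib]
      exact ⟨hw2, hw1⟩
  · rw [ha2 i hia]
    exact ⟨hu2, hu1⟩

/-- Cost of a part: `bdim + 2` if nonempty, `0` otherwise. -/
noncomputable def pcost (P : Set (Fin d → Fin n)) : ℕ :=
  if P = ∅ then 0 else bdim P + 2

lemma pcost_empty : pcost (∅ : Set (Fin d → Fin n)) = 0 := if_pos rfl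

lemma pcost_of_nonempty {P : Set (Fin d → Fin n)} (h : P.Nonempty) :
    pcost P = bdim P + 2 := if_neg h.ne_empty

/-- A finite cover of `S` of total cost at most `m`. -/
def CoverBound (S : Set (Fin d → Fin n)) (m : ℕ) : Prop :=
  ∃ PP : Finset (Set (Fin d → Fin n)), ⋃₀ (↑PP : Set (Set (Fin d → Fin n))) = S ∧
    ∑ P ∈ PP, pcost P ≤ m

lemma sum_insert_le' {α : Type*} [DecidableEq α] (f : α → ℕ) (a : α) (s : Finset α) :
    ∑ x ∈ insert a s, f x ≤ f a + ∑ x ∈ s, f x := by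
  by_cases h : a ∈ s
  · rw [Finset.insert_eq_self.2 h]; omega
  · rw [Finset.sum_insert h]

lemma sUnion_eq_part_union {PP : Finset (Set (Fin d → Fin n))} {P : Set (Fin d → Fin n)}
    (hP : P ∈ PP) :
    ⋃₀ (↑PP : Set (Set (Fin d → Fin n))) = P ∪ ⋃₀ (↑(PP.erase P) : Set (Set (Fin d → Fin n))) := by
  ext x
  simp only [Set.mem_sUnion, Finset.mem_coe, Finset.mem_erase, Set.mem_union]
  constructor
  · rintro ⟨Q, hQ, hx⟩
    by_cases hQP : Q = P
    · exact Or.inl (hQP ▸ hx)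
    · exact Or.inr ⟨Q, ⟨hQP, hQ⟩, hx⟩
  · rintro (hx | ⟨Q, ⟨-, hQ⟩, hx⟩)
    · exact ⟨P, hP, hx⟩
    · exact ⟨Q, hQ, hx⟩

/-- Singleton cover bound. -/
lemma coverBound_self (S : Set (Fin d → Fin n)) : CoverBound S (2 * S.ncard) := by
  refine ⟨(S.toFinite.toFinset).image (fun x => ({x} : Set (Fin d → Fin n))), ?_, ?_⟩
  · ext x
    simp only [Set.mem_sUnion, Finset.mem_coe, Finset.mem_image, Set.Finite.mem_toFinset]
    constructor
    · rintro ⟨P, ⟨y, hy, rfl⟩, hx⟩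
      rw [Set.mem_singleton_iff] at hx
      exact hx ▸ hy
    · intro hx
      exact ⟨{x}, ⟨x, hx, rfl⟩, rfl⟩
  · rw [Finset.sum_image (fun a _ b _ h => Set.singleton_injective h)]
    have h2 : ∀ x ∈ S.toFinite.toFinset, pcost ({x} : Set (Fin d → Fin n)) = 2 := fun x _ => by
      rw [pcost_of_nonempty (Set.singleton_nonempty x), bdim_singleton]
    rw [Finset.sum_congr rfl h2, Finset.sum_const, smul_eq_mul,
      Set.ncard_eq_toFinset_card S S.toFinite]
    omega

/-- Adding a vertex with two distinct neighbours preserves a cover bound. -/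
lemma coverBound_insert {S : Set (Fin d → Fin n)} {m : ℕ} (v : Fin d → Fin n)
    (hex : ∃ u w, u ∈ S ∧ w ∈ S ∧ u ≠ w ∧ gridAdj n d v u ∧ gridAdj n d v w)
    (h : CoverBound S m) : CoverBound (insert v S) m := by
  obtain ⟨u, w, huS, hwS, huw, hau, haw⟩ := hex
  obtain ⟨PP, hU, hSum⟩ := h
  obtain ⟨Pa, hPa, hua⟩ := Set.mem_sUnion.1 (show u ∈ ⋃₀ (↑PP : Set (Set (Fin d → Fin n))) from hU.symm ▸ huS)
  obtain ⟨Pb, hPb, hwb⟩ := Set.mem_sUnion.1 (show w ∈ ⋃₀ (↑PP : Set (Set (Fin d → Fin n))) from hU.symm ▸ hwS)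
  rw [Finset.mem_coe] at hPa hPb
  by_cases hab : Pa = Pb
  · subst hab
    refine ⟨insert (insert v Pa) (PP.erase Pa), ?_, ?_⟩
    · rw [Finset.coe_insert, Set.sUnion_insert, Set.insert_union,
        ← sUnion_eq_part_union hPa, hU]
    · have h1 := Finset.sum_erase_add PP pcost hPa
      have h3 := sum_insert_le' pcost (insert v Pa) (PP.erase Pa)
      have h2 : pcost (insert v Pa) ≤ pcost Pa := by
        rw [pcost_of_nonempty ⟨u, Set.mem_insert_of_mem _ hua⟩, pcost_of_nonempty ⟨u, hua⟩]
        have := bdim_insert_le hua hwb huw hau haw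
        omega
      omega
  · have hPb' : Pb ∈ PP.erase Pa := Finset.mem_erase.2 ⟨fun hh => hab hh.symm, hPb⟩
    refine ⟨insert ({v} ∪ Pa ∪ Pb) ((PP.erase Pa).erase Pb), ?_, ?_⟩
    · rw [Finset.coe_insert, Set.sUnion_insert, ← hU, sUnion_eq_part_union hPa,
        sUnion_eq_part_union hPb']
      ext x
      simp only [Set.mem_union, Set.mem_insert_iff, Set.mem_singleton_iff]
      tauto
    · have h1 := Finset.sum_erase_add (PP.erase Pa) pcost hPb'
      have h2 := Finset.sum_erase_add PP pcost hPa
      have h3 := sum_insert_le' pcost ({v} ∪ Pa ∪ Pb) ((PP.erase Pa).erase Pb)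
      have h4 : pcost ({v} ∪ Pa ∪ Pb) ≤ pcost Pa + pcost Pb := by
        rw [pcost_of_nonempty ⟨v, Or.inl (Or.inl rfl)⟩, pcost_of_nonempty ⟨u, hua⟩,
          pcost_of_nonempty ⟨w, hwb⟩]
        have m1 : bdim ({v} ∪ Pa) ≤ bdim {v} + bdim Pa + l1 v u :=
          bdim_union_le (Set.mem_singleton v) hua
        have m2 : bdim ({v} ∪ Pa ∪ Pb) ≤ bdim ({v} ∪ Pa) + bdim Pb + l1 v w :=
          bdim_union_le (Or.inl (Set.mem_singleton v)) hwb
        have e0 : bdim ({v} : Set (Fin d → Fin n)) = 0 := bdim_singleton v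
        have d1 : l1 v u = 1 := gridAdj_l1 hau
        have d2 : l1 v w = 1 := gridAdj_l1 haw
        omega
      omega

/-- One parallel bootstrap step preserves a cover bound. -/
lemma coverBound_bootStep {S : Set (Fin d → Fin n)} {m : ℕ} (h : CoverBound S m) :
    CoverBound (bootStep (gridAdj n d) 2 S) m := by
  have key : ∀ F : Set (Fin d → Fin n), F.Finite →
      (∀ v ∈ F, 2 ≤ {u | gridAdj n d v u ∧ u ∈ S}.ncard) → CoverBound (S ∪ F) m := by
    intro F hF
    refine Set.Finite.induction_on (motive := fun F _ => (∀ v ∈ F, 2 ≤ {u | gridAdj n d v u ∧ u ∈ S}.ncard) → CoverBound (S ∪ F) m) F hF (fun _ => by simpa using h) ?_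
    intro v F' hvF' hF'' ih hcond
    rw [Set.union_insert]
    refine coverBound_insert v ?_ (ih fun u hu => hcond u (Set.mem_insert_of_mem _ hu))
    have h2 := hcond v (Set.mem_insert _ _)
    obtain ⟨a, ha, b, hb, hab⟩ := (Set.one_lt_ncard (Set.toFinite _)).1 h2
    exact ⟨a, b, Or.inl ha.2, Or.inl hb.2, hab, ha.1, hb.1⟩
  exact key _ (Set.toFinite _) (fun v hv => hv)

lemma l1_update_eq (x z : Fin d → Fin n) (i : Fin d) (c : Fin n) :
    l1 (Function.update x i c) z + ((x i : ℕ) - (z i : ℕ) + ((z i : ℕ) - (x i : ℕ)))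
      = l1 x z + ((c : ℕ) - (z i : ℕ) + ((z i : ℕ) - (c : ℕ))) := by
  rw [l1, l1, ← Finset.add_sum_erase _ _ (Finset.mem_univ i),
    ← Finset.add_sum_erase _ _ (Finset.mem_univ i)]
  have hcongr : ∑ j ∈ Finset.univ.erase i,
      ((Function.update x i c j : ℕ) - (z j : ℕ) + ((z j : ℕ) - (Function.update x i c j : ℕ)))
      = ∑ j ∈ Finset.univ.erase i, ((x j : ℕ) - (z j : ℕ) + ((z j : ℕ) - (x j : ℕ))) :=
    Finset.sum_congr rfl fun j hj => by
      rw [Function.update_of_ne (Finset.mem_erase.1 hj).1]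
  rw [hcongr, Function.update_self]
  omega

lemma l1_update_self (x : Fin d → Fin n) (i : Fin d) (c : Fin n) :
    l1 x (Function.update x i c) = (x i : ℕ) - (c : ℕ) + ((c : ℕ) - (x i : ℕ)) := by
  rw [l1, ← Finset.add_sum_erase _ _ (Finset.mem_univ i)]
  have h0 : ∑ j ∈ Finset.univ.erase i,
      ((x j : ℕ) - (Function.update x i c j : ℕ) + ((Function.update x i c j : ℕ) - (x j : ℕ)))
      = 0 :=
    Finset.sum_eq_zero fun j hj => by
      rw [Function.update_of_ne (Finset.mem_erase.1 hj).1]; omega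
  rw [h0, Function.update_self]; omega

/-- Connectivity of a box: from a point of `T` one can reach the complement. -/
lemma box_reach {lo hi : Fin d → Fin n} {T : Set (Fin d → Fin n)}
    (hT : T ⊆ {x : Fin d → Fin n | ∀ i, lo i ≤ x i ∧ x i ≤ hi i}) :
    ∀ k : ℕ, ∀ x, x ∈ T → ∀ z, z ∈ {x : Fin d → Fin n | ∀ i, lo i ≤ x i ∧ x i ≤ hi i} →
      z ∉ T → l1 x z ≤ k →
      ∃ u ∈ T, ∃ y, (y ∈ {x : Fin d → Fin n | ∀ i, lo i ≤ x i ∧ x i ≤ hi i}) ∧ y ∉ T ∧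
        l1 u y ≤ 1 := by
  intro k
  induction k with
  | zero =>
    intro x hx z hz hzT hl
    exact absurd (l1_eq_zero (Nat.le_zero.1 hl) ▸ hx) hzT
  | succ k ih =>
    intro x hx z hz hzT hl
    by_cases h0 : l1 x z = 0
    · exact absurd (l1_eq_zero h0 ▸ hx) hzT
    obtain ⟨i, hi0⟩ : ∃ i, (x i : ℕ) ≠ (z i : ℕ) := by
      by_contra hc
      push_neg at hc
      exact h0 (Finset.sum_eq_zero fun j _ => by have := hc j; omega)
    have hxB := hT hx
    have hx1 := (hxB i).1; have hx2 := (hxB i).2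
    have hz1 := (hz i).1; have hz2 := (hz i).2
    rw [Fin.le_def] at hx1 hx2 hz1 hz2
    obtain ⟨c, hc1, hc1', hc2, hc3⟩ :
        ∃ c : Fin n, (lo i : ℕ) ≤ (c : ℕ) ∧ (c : ℕ) ≤ (hi i : ℕ) ∧
          ((x i : ℕ) - (c : ℕ) + ((c : ℕ) - (x i : ℕ)) ≤ 1) ∧
          (((c : ℕ) - (z i : ℕ) + ((z i : ℕ) - (c : ℕ))) + 1
            = (x i : ℕ) - (z i : ℕ) + ((z i : ℕ) - (x i : ℕ))) := by
      rcases Nat.lt_or_ge (x i : ℕ) (z i : ℕ) with hlt | hge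
      · have hn : (x i : ℕ) + 1 < n := by have := (z i).isLt; omega
        refine ⟨⟨(x i : ℕ) + 1, hn⟩, ?_, ?_, ?_, ?_⟩ <;> · simp only [Fin.val_mk]; omega
      · have hn : (x i : ℕ) - 1 < n := by have := (x i).isLt; omega
        refine ⟨⟨(x i : ℕ) - 1, hn⟩, ?_, ?_, ?_, ?_⟩ <;> · simp only [Fin.val_mk]; omega
    have hx'B : Function.update x i c ∈
        {x : Fin d → Fin n | ∀ i, lo i ≤ x i ∧ x i ≤ hi i} := by
      intro j
      by_cases hj : j = i
      · subst hj
        rw [Function.update_self]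
        exact ⟨Fin.le_def.2 hc1, Fin.le_def.2 hc1'⟩
      · rw [Function.update_of_ne hj]
        exact ⟨(hxB j).1, (hxB j).2⟩
    have heq := l1_update_eq x z i c
    by_cases hx'T : Function.update x i c ∈ T
    · exact ih (Function.update x i c) hx'T z hz hzT (by omega)
    · refine ⟨x, hx, Function.update x i c, hx'B, hx'T, ?_⟩
      rw [l1_update_self]
      omega

/-- Lower bound: any cover of a nonempty box pays at least its dimension plus 2. -/
lemma cover_lb_aux {lo hi : Fin d → Fin n} (hlohi : ∀ i, lo i ≤ hi i) :
    ∀ k : ℕ, ∀ PP : Finset (Set (Fin d → Fin n)), PP.card ≤ k →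
      ⋃₀ (↑PP : Set (Set (Fin d → Fin n))) = {x : Fin d → Fin n | ∀ i, lo i ≤ x i ∧ x i ≤ hi i} →
      bdim {x : Fin d → Fin n | ∀ i, lo i ≤ x i ∧ x i ≤ hi i} + 2 ≤ ∑ P ∈ PP, pcost P := by
  have hloB : lo ∈ {x : Fin d → Fin n | ∀ i, lo i ≤ x i ∧ x i ≤ hi i} :=
    fun i => ⟨le_refl _, hlohi i⟩
  intro k
  induction k with
  | zero =>
    intro PP hcard hU
    have hPP : PP = ∅ := Finset.card_eq_zero.1 (Nat.le_zero.1 hcard)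
    subst hPP
    rw [Finset.coe_empty, Set.sUnion_empty] at hU
    exact absurd (hU ▸ hloB) (Set.notMem_empty lo)
  | succ k ih =>
    intro PP hcard hU
    by_cases hemp : (∅ : Set (Fin d → Fin n)) ∈ PP
    · have h1 : ⋃₀ (↑(PP.erase ∅) : Set (Set (Fin d → Fin n)))
          = {x : Fin d → Fin n | ∀ i, lo i ≤ x i ∧ x i ≤ hi i} := by
        rw [← hU, sUnion_eq_part_union hemp, Set.empty_union]
      have h2 := Finset.sum_erase_add PP pcost hemp
      have h3 : (PP.erase ∅).card ≤ k := by
        have := Finset.card_erase_of_mem hemp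
        omega
      have hrec0 := ih (PP.erase ∅) h3 h1
      rw [pcost_empty] at h2
      refine hrec0.trans ?_
      clear hrec0
      omega
    · obtain ⟨Pa, hPa, hloPa⟩ := Set.mem_sUnion.1 (hU.symm ▸ hloB)
      rw [Finset.mem_coe] at hPa
      rcases Nat.lt_or_ge 1 PP.card with hbig | hsmall
      · -- at least two parts: find a merge
        have hPaB : Pa ⊆ {x : Fin d → Fin n | ∀ i, lo i ≤ x i ∧ x i ≤ hi i} := by
          rw [← hU]
          exact Set.subset_sUnion_of_mem hPa
        obtain ⟨Pb, hPb, hab, u, hu, yy, hyb, hlink⟩ :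
            ∃ Pb ∈ PP, Pa ≠ Pb ∧ ∃ u ∈ Pa, ∃ yy ∈ Pb, l1 u yy ≤ 1 := by
          by_cases hcover : {x : Fin d → Fin n | ∀ i, lo i ≤ x i ∧ x i ≤ hi i} ⊆ Pa
          · obtain ⟨Pb, hPb, hba⟩ := Finset.exists_mem_ne hbig Pa
            have hPbne : Pb.Nonempty := Set.nonempty_iff_ne_empty.2 fun hh => hemp (hh ▸ hPb)
            obtain ⟨w, hw⟩ := hPbne
            have hwB : w ∈ {x : Fin d → Fin n | ∀ i, lo i ≤ x i ∧ x i ≤ hi i} := by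
              rw [← hU]
              exact ⟨Pb, hPb, hw⟩
            exact ⟨Pb, hPb, fun hh => hba hh.symm, w, hcover hwB, w, hw, by rw [l1_self]; omega⟩
          · obtain ⟨z, hzB, hzPa⟩ := Set.not_subset.1 hcover
            obtain ⟨u, hu, y, hyB, hyPa, hl⟩ :=
              box_reach hPaB (l1 lo z) lo hloPa z hzB hzPa le_rfl
            obtain ⟨Pb, hPb, hyb⟩ := Set.mem_sUnion.1 (show y ∈ ⋃₀ (↑PP : Set (Set (Fin d → Fin n))) from hU.symm ▸ hyB)
            rw [Finset.mem_coe] at hPb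
            exact ⟨Pb, hPb, fun hh => hyPa (hh ▸ hyb), u, hu, y, hyb, hl⟩
        have hPb' : Pb ∈ PP.erase Pa := Finset.mem_erase.2 ⟨fun hh => hab hh.symm, hPb⟩
        have hPbB : Pb ⊆ {x : Fin d → Fin n | ∀ i, lo i ≤ x i ∧ x i ≤ hi i} := by
          rw [← hU]
          exact Set.subset_sUnion_of_mem hPb
        -- merged cover
        have hU' : ⋃₀ (↑(insert (Pa ∪ Pb) ((PP.erase Pa).erase Pb)) :
            Set (Set (Fin d → Fin n)))
            = {x : Fin d → Fin n | ∀ i, lo i ≤ x i ∧ x i ≤ hi i} := by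
          rw [Finset.coe_insert, Set.sUnion_insert]
          apply Set.Subset.antisymm
          · apply Set.union_subset (Set.union_subset hPaB hPbB)
            intro t ht
            obtain ⟨P, hP, htP⟩ := Set.mem_sUnion.1 ht
            rw [Finset.mem_coe, Finset.mem_erase, Finset.mem_erase] at hP
            rw [← hU]
            exact ⟨P, hP.2.2, htP⟩
          · rw [← hU, sUnion_eq_part_union hPa, sUnion_eq_part_union hPb']
            intro t ht
            rcases ht with ht | ht | ht
            · exact Or.inl (Or.inl ht)
            · exact Or.inl (Or.inr ht)
            · exact Or.inr ht
        have hcard' : (insert (Pa ∪ Pb) ((PP.erase Pa).erase Pb)).card ≤ k := by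
          have c1 := Finset.card_insert_le (Pa ∪ Pb) ((PP.erase Pa).erase Pb)
          have c2 := Finset.card_erase_of_mem hPb'
          have c3 := Finset.card_erase_of_mem hPa
          omega
        have h1 := Finset.sum_erase_add (PP.erase Pa) pcost hPb'
        have h2 := Finset.sum_erase_add PP pcost hPa
        have h3 := sum_insert_le' pcost (Pa ∪ Pb) ((PP.erase Pa).erase Pb)
        have h4 : pcost (Pa ∪ Pb) ≤ pcost Pa + pcost Pb - 1 := by
          rw [pcost_of_nonempty ⟨u, Or.inl hu⟩, pcost_of_nonempty ⟨u, hu⟩,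
            pcost_of_nonempty ⟨yy, hyb⟩]
          have := bdim_union_le hu hyb
          omega
        have hrec := ih _ hcard' hU'
        refine hrec.trans ?_
        clear hrec
        omega
      · -- exactly one part
        have hPP : PP = {Pa} := by
          apply Finset.eq_singleton_iff_unique_mem.2
          exact ⟨hPa, fun x hx => Finset.card_le_one.1 hsmall x hx Pa hPa⟩
        subst hPP
        rw [Finset.coe_singleton, Set.sUnion_singleton] at hU
        rw [Finset.sum_singleton, hU, pcost_of_nonempty ⟨lo, hloB⟩]

/-- bdim of a box equals its cubeDim. -/
lemma bdim_box {lo hi : Fin d → Fin n} (hlohi : ∀ i, lo i ≤ hi i) :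
    cubeDim {x : Fin d → Fin n | ∀ i, lo i ≤ x i ∧ x i ≤ hi i}
      = bdim {x : Fin d → Fin n | ∀ i, lo i ≤ x i ∧ x i ≤ hi i} := by
  unfold cubeDim bdim
  apply Finset.sum_congr rfl
  intro i _
  have hloB : lo ∈ {x : Fin d → Fin n | ∀ i, lo i ≤ x i ∧ x i ≤ hi i} :=
    fun j => ⟨le_refl _, hlohi j⟩
  have hhiB : hi ∈ {x : Fin d → Fin n | ∀ i, lo i ≤ x i ∧ x i ≤ hi i} :=
    fun j => ⟨hlohi j, le_refl _⟩
  have himg : (fun x : Fin d → Fin n => x i) '' {x | ∀ i, lo i ≤ x i ∧ x i ≤ hi i}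
      = Set.Icc (lo i) (hi i) := by
    ext c
    simp only [Set.mem_image, Set.mem_Icc, Set.mem_setOf_eq]
    constructor
    · rintro ⟨x, hx, rfl⟩
      exact ⟨(hx i).1, (hx i).2⟩
    · rintro ⟨h1, h2⟩
      refine ⟨Function.update lo i c, ?_, Function.update_self i c lo⟩
      intro j
      by_cases hj : j = i
      · subst hj
        rw [Function.update_self]
        exact ⟨h1, h2⟩
      · rw [Function.update_of_ne hj]
        exact ⟨le_refl _, hlohi j⟩
  have h1 : csupC {x : Fin d → Fin n | ∀ i, lo i ≤ x i ∧ x i ≤ hi i} i = (hi i : ℕ) := by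
    apply le_antisymm
    · obtain ⟨x, hx, hxe⟩ := csupC_attained ⟨lo, hloB⟩ i
      rw [← hxe]
      exact Fin.le_def.1 (hx i).2
    · exact le_csupC hhiB i
  have h2 : cinfC {x : Fin d → Fin n | ∀ i, lo i ≤ x i ∧ x i ≤ hi i} i = (lo i : ℕ) := by
    apply le_antisymm
    · exact cinfC_le hloB i
    · obtain ⟨x, hx, hxe⟩ := cinfC_attained ⟨lo, hloB⟩ i
      rw [← hxe]
      exact Fin.le_def.1 (hx i).1
  rw [himg, h1, h2, ← Finset.coe_Icc, Set.ncard_coe_finset, Fin.card_Icc]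
  have := Fin.le_def.1 (hlohi i)
  clear h1 h2
  omega

lemma arith_lem1 (l N D : ℕ) (a : D + 2 ≤ 2 * N) (b : D = 2 * l) : l + 1 ≤ N := by omega

lemma arith_lem2 (l N D : ℕ) (a : D + 2 ≤ 2 * N) (b : D = 2 * l + 1) : l + 2 ≤ N := by omega

end MinSpanAux

/-- A spanning set of a cube `Q` has at least `dim(Q)/2 + 1`
elements; in particular `ℓ+1` for `[2]^{2ℓ}` and `ℓ+2` for `[2]^{2ℓ+1}`. -/
theorem min_spanning_size {n d : ℕ} (Q : Set (Fin d → Fin n)) (hQ : IsCube Q)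
    (A : Set (Fin d → Fin n)) (hspan : IntSpans n d A Q) :
    cubeDim Q + 2 ≤ 2 * (A ∩ Q).ncard ∧
    (∀ ℓ : ℕ, IsHypercube Q → cubeDim Q = 2 * ℓ → ℓ + 1 ≤ (A ∩ Q).ncard) ∧
    (∀ ℓ : ℕ, IsHypercube Q → cubeDim Q = 2 * ℓ + 1 → ℓ + 2 ≤ (A ∩ Q).ncard) := by
  obtain ⟨lo, hi, hlohi, rfl⟩ := hQ
  have hspan' : bootClosure (gridAdj n d) 2
      (A ∩ {x : Fin d → Fin n | ∀ i, lo i ≤ x i ∧ x i ≤ hi i})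
      = {x : Fin d → Fin n | ∀ i, lo i ≤ x i ∧ x i ≤ hi i} := hspan
  have main : cubeDim {x : Fin d → Fin n | ∀ i, lo i ≤ x i ∧ x i ≤ hi i} + 2
      ≤ 2 * (A ∩ {x : Fin d → Fin n | ∀ i, lo i ≤ x i ∧ x i ≤ hi i}).ncard := by
    have hcb : ∀ t, CoverBound
        ((bootStep (gridAdj n d) 2)^[t]
          (A ∩ {x : Fin d → Fin n | ∀ i, lo i ≤ x i ∧ x i ≤ hi i}))
        (2 * (A ∩ {x : Fin d → Fin n | ∀ i, lo i ≤ x i ∧ x i ≤ hi i}).ncard) := by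
      intro t
      induction t with
      | zero => simpa using coverBound_self _
      | succ t ih =>
        rw [Function.iterate_succ_apply']
        exact coverBound_bootStep ih
    have hstep : ∀ t : ℕ,
        (bootStep (gridAdj n d) 2)^[t]
          (A ∩ {x : Fin d → Fin n | ∀ i, lo i ≤ x i ∧ x i ≤ hi i}) ⊆
        (bootStep (gridAdj n d) 2)^[t + 1]
          (A ∩ {x : Fin d → Fin n | ∀ i, lo i ≤ x i ∧ x i ≤ hi i}) := by
      intro t
      rw [Function.iterate_succ_apply']
      exact Set.subset_union_left
    have hmono : ∀ s t : ℕ, s ≤ t →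
        (bootStep (gridAdj n d) 2)^[s]
          (A ∩ {x : Fin d → Fin n | ∀ i, lo i ≤ x i ∧ x i ≤ hi i}) ⊆
        (bootStep (gridAdj n d) 2)^[t]
          (A ∩ {x : Fin d → Fin n | ∀ i, lo i ≤ x i ∧ x i ≤ hi i}) :=
      fun s t h => monotone_nat_of_le_succ hstep h
    obtain ⟨T, hT⟩ : ∃ T : ℕ,
        (bootStep (gridAdj n d) 2)^[T]
          (A ∩ {x : Fin d → Fin n | ∀ i, lo i ≤ x i ∧ x i ≤ hi i})
        = {x : Fin d → Fin n | ∀ i, lo i ≤ x i ∧ x i ≤ hi i} := by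
      have hub : ∀ q : Fin d → Fin n, q ∈ {x : Fin d → Fin n | ∀ i, lo i ≤ x i ∧ x i ≤ hi i} →
          ∃ t : ℕ, q ∈ (bootStep (gridAdj n d) 2)^[t]
            (A ∩ {x : Fin d → Fin n | ∀ i, lo i ≤ x i ∧ x i ≤ hi i}) := by
        intro q hq
        have hq2 : q ∈ bootClosure (gridAdj n d) 2
            (A ∩ {x : Fin d → Fin n | ∀ i, lo i ≤ x i ∧ x i ≤ hi i}) := by
          rw [hspan']; exact hq
        exact Set.mem_iUnion.1 hq2
      choose! f hf using hub
      refine ⟨Finset.univ.sup f, Set.Subset.antisymm ?_ ?_⟩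
      · intro q hq
        rw [← hspan']
        exact Set.mem_iUnion.2 ⟨_, hq⟩
      · intro q hq
        exact hmono _ _ (Finset.le_sup (Finset.mem_univ q)) (hf q hq)
    obtain ⟨PP, hU, hSum⟩ := hT ▸ hcb T
    have hlb := cover_lb_aux hlohi PP.card PP le_rfl hU
    have hbd := bdim_box hlohi
    rw [hbd]
    exact hlb.trans hSum
  exact ⟨main, fun ℓ _ h => arith_lem1 ℓ _ _ main h, fun ℓ _ h => arith_lem2 ℓ _ _ main h⟩
end
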